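/- arXiv:2305.11593 — 5 statements merged into one kernel-verified Lean document; each statement's English description precedes it below -/
import Mathlib

section
/- Let X be a Banach space, Y a subprojective Banach space, T : X → Y a bounded operator, and M a closed infinite-dimensional subspace of X such that the restriction T|_M is not strictly singular. Then M contains an infinite-dimensional closed subspace that is complemented in X. -/
/-- A Banach space is subprojective if every closed infinite-dimensional subspace
contains an infinite-dimensional closed subspace complemented in the whole space. -/
def Subprojective (Y : Type*) [NormedAddCommGroup Y] [NormedSpace ℝ Y] : Prop :=
  ∀ M : Submodule ℝ Y, IsClosed (M : Set Y) → ¬FiniteDimensional ℝ M →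
    ∃ N : Submodule ℝ Y, N ≤ M ∧ IsClosed (N : Set Y) ∧ ¬FiniteDimensional ℝ N ∧
      N.ClosedComplemented

/-- A linear map is strictly singular if it is an isomorphism (bounded below)
on no closed infinite-dimensional subspace. -/
def StrictlySingular {X Y : Type*} [NormedAddCommGroup X] [NormedSpace ℝ X]
    [NormedAddCommGroup Y] [NormedSpace ℝ Y] (T : X →ₗ[ℝ] Y) : Prop :=
  ∀ N : Submodule ℝ X, IsClosed (N : Set X) → ¬FiniteDimensional ℝ N →
    ¬∃ c : ℝ, 0 < c ∧ ∀ x ∈ N, c * ‖x‖ ≤ ‖T x‖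

/-- if `Y` is subprojective, `T : X → Y` is a bounded operator and `M` is a
closed infinite-dimensional subspace of `X` on which `T` is not strictly singular
(i.e. `T` is bounded below on some closed infinite-dimensional subspace of `M`),
then `M` contains an infinite-dimensional closed subspace complemented in `X`. -/
theorem stmt0 {X Y : Type*} [NormedAddCommGroup X] [NormedSpace ℝ X] [CompleteSpace X]
    [NormedAddCommGroup Y] [NormedSpace ℝ Y] [CompleteSpace Y]
    (hY : Subprojective Y) (T : X →L[ℝ] Y)
    (M : Submodule ℝ X) (hMc : IsClosed (M : Set X)) (hMd : ¬FiniteDimensional ℝ M)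
    (hTM : ∃ N : Submodule ℝ X, N ≤ M ∧ IsClosed (N : Set X) ∧ ¬FiniteDimensional ℝ N ∧
      ∃ c : ℝ, 0 < c ∧ ∀ x ∈ N, c * ‖x‖ ≤ ‖T x‖) :
    ∃ N : Submodule ℝ X, N ≤ M ∧ IsClosed (N : Set X) ∧ ¬FiniteDimensional ℝ N ∧
      N.ClosedComplemented := by
  obtain ⟨N, hNM, hNc, hNd, c, hc, hb⟩ := hTM
  haveI : CompleteSpace N := hNc.completeSpace_coe
  -- injectivity of T on N
  have hTinj : ∀ x ∈ N, T x = 0 → x = 0 := by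
    intro x hx hx0
    have := hb x hx
    rw [hx0, norm_zero] at this
    have : ‖x‖ ≤ 0 := by nlinarith
    simpa using le_antisymm this (norm_nonneg x)
  -- the image W = T(N)
  set W : Submodule ℝ Y := N.map (T : X →ₗ[ℝ] Y) with hW
  have hWc : IsClosed (W : Set Y) := by
    set g : N →L[ℝ] Y := T.comp N.subtypeL with hg
    have hanti : AntilipschitzWith ⟨c, hc.le⟩⁻¹ g := by
      apply g.antilipschitz_of_bound
      intro x
      have hcoe : (↑(⟨c, hc.le⟩⁻¹ : NNReal) : ℝ) = c⁻¹ := rfl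
      rw [hcoe, le_inv_mul_iff₀ hc]
      exact hb x x.2
    have hr : Set.range g = (W : Set Y) := by
      ext y
      simp [hg, hW, Submodule.mem_map, Set.range, SetLike.exists]
    rw [← hr]
    exact hanti.isClosed_range g.uniformContinuous
  have hWd : ¬FiniteDimensional ℝ W := by
    intro hfin
    apply hNd
    set h : N →ₗ[ℝ] W :=
      LinearMap.codRestrict W ((T : X →ₗ[ℝ] Y).comp N.subtype)
        (fun x => Submodule.mem_map_of_mem x.2) with hh
    have hinj : Function.Injective h := by
      intro a b hab
      have : T ((a : X) - b) = 0 := by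
        have := congrArg (Subtype.val) hab
        simp only [hh, LinearMap.codRestrict_apply, LinearMap.comp_apply,
          Submodule.subtype_apply, ContinuousLinearMap.coe_coe] at this
        rw [map_sub, this, sub_self]
      have := hTinj _ (sub_mem a.2 b.2) this
      exact Subtype.ext (by rwa [sub_eq_zero] at this)
    exact FiniteDimensional.of_injective h hinj
  -- apply subprojectivity
  obtain ⟨W', hW'W, hW'c, hW'd, P, hP⟩ := hY W hWc hWd
  haveI : CompleteSpace W' := hW'c.completeSpace_coe
  -- the preimage N' of W' in N
  set N' : Submodule ℝ X := N ⊓ W'.comap (T : X →ₗ[ℝ] Y) with hN'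
  have hN'N : N' ≤ N := inf_le_left
  have hN'c : IsClosed (N' : Set X) := by
    have : (N' : Set X) = (N : Set X) ∩ (⇑T ⁻¹' (W' : Set Y)) := by
      ext x; simp [hN']
    rw [this]
    exact hNc.inter (hW'c.preimage T.continuous)
  haveI : CompleteSpace N' := hN'c.completeSpace_coe
  -- the restriction of T as a map N' → W'
  have hmem : ∀ x : N', T (x : X) ∈ W' := fun x => x.2.2
  set f : N' →L[ℝ] W' := (T.comp N'.subtypeL).codRestrict W' hmem with hf
  have hker : f.ker = ⊥ := by
    rw [LinearMap.ker_eq_bot]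
    intro a b hab
    have : T ((a : X) - b) = 0 := by
      have := congrArg (Subtype.val) hab
      simp only [hf, ContinuousLinearMap.coe_codRestrict_apply,
        ContinuousLinearMap.comp_apply, Submodule.subtypeL_apply, ContinuousLinearMap.coe_coe] at this
      change T (a : X) = T (b : X) at this
      rw [map_sub, this, sub_self]
    have := hTinj _ (sub_mem (hN'N a.2) (hN'N b.2)) this
    exact Subtype.ext (by rwa [sub_eq_zero] at this)
  have hrange : f.range = ⊤ := by
    rw [LinearMap.range_eq_top]
    intro w
    have hwW : (w : Y) ∈ W := hW'W w.2
    obtain ⟨x, hxN, hxw⟩ := hwW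
    refine ⟨⟨x, hxN, ?_⟩, ?_⟩
    · show T x ∈ W'
      rw [show T x = (w : Y) from hxw]; exact w.2
    · apply Subtype.ext
      exact hxw
  set e := ContinuousLinearEquiv.ofBijective f hker hrange with he
  refine ⟨N', hN'N.trans hNM, hN'c, ?_, ?_⟩
  · intro hfin
    exact hW'd (Module.Finite.equiv e.toLinearEquiv)
  · refine ⟨(e.symm : W' →L[ℝ] N').comp (P.comp T), ?_⟩
    intro x
    have hTx : T (x : X) ∈ W' := x.2.2
    have h1 : P (T (x : X)) = ⟨T (x : X), hTx⟩ := hP ⟨T (x : X), hTx⟩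
    have h2 : e x = ⟨T (x : X), hTx⟩ := Subtype.ext rfl
    simp only [ContinuousLinearMap.comp_apply, h1, ContinuousLinearEquiv.coe_coe]
    rw [← h2, ContinuousLinearEquiv.symm_apply_apply]
end

section
/- Let X be a Banach space and let M, N be closed subspaces of X such that M ∩ N = {0} and M + N is not closed. Then there exists a bounded linear automorphism U of X such that U(M) ∩ N is infinite-dimensional. -/
open Metric Set

set_option maxHeartbeats 1000000
set_option synthInstance.maxHeartbeats 1000000

section Aux

variable {X : Type*} [NormedAddCommGroup X] [NormedSpace ℝ X]

noncomputable def mkQc (A : Submodule ℝ X) : X →L[ℝ] (X ⧸ A) :=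
  A.mkQ.mkContinuous 1 (fun x => by
    simpa using Submodule.Quotient.norm_mk_le A x)

lemma mkQc_apply (A : Submodule ℝ X) (x : X) : mkQc A x = Submodule.Quotient.mk x := rfl

lemma norm_mkQc_le (A : Submodule ℝ X) : ‖mkQc A‖ ≤ 1 :=
  A.mkQ.mkContinuous_norm_le zero_le_one _

/-- A functional vanishing on a closed subspace, of controlled norm. -/
lemma exists_functional (F : Submodule ℝ X) (hF : IsClosed (F : Set X)) (x : X) {d : ℝ}
    (hd : 0 < d) (hdist : ∀ v ∈ F, d ≤ ‖x - v‖) :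
    ∃ f : X →L[ℝ] ℝ, f x = 1 ∧ ‖f‖ ≤ d⁻¹ ∧ ∀ v ∈ F, f v = 0 := by
  letI : NormedAddCommGroup (X ⧸ F) := Submodule.Quotient.normedAddCommGroup F (hS := hF)
  letI : NormedSpace ℝ (X ⧸ F) := Submodule.Quotient.normedSpace F ℝ
  set q : X →L[ℝ] (X ⧸ F) := mkQc F with hq
  -- lower bound on ‖q x‖
  have hqx : d ≤ ‖q x‖ := by
    by_contra hlt
    push_neg at hlt
    obtain ⟨m, hm, hmlt⟩ := Submodule.Quotient.norm_mk_lt (S := F) (q x)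
      (show (0:ℝ) < d - ‖q x‖ by linarith)
    have hmem : x - m ∈ F := by
      rw [mkQc_apply] at hm
      have h' := (Submodule.Quotient.eq F).mp hm
      simpa [neg_sub] using F.neg_mem h'
    have := hdist (x - m) hmem
    simp only [sub_sub_cancel] at this
    linarith
  have hqxpos : 0 < ‖q x‖ := lt_of_lt_of_le hd hqx
  have hqx0 : q x ≠ 0 := by
    intro h
    rw [h, norm_zero] at hqxpos; linarith
  obtain ⟨g, hg1, hg2⟩ := exists_dual_vector ℝ (q x) (norm_ne_zero_iff.mpr hqx0)
  refine ⟨(‖q x‖)⁻¹ • (g.comp q), ?_, ?_, ?_⟩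
  · simp [hg2]
    field_simp
  · have h0 : ‖(‖q x‖)⁻¹ • (g.comp q)‖ ≤ ‖(‖q x‖)⁻¹‖ * ‖g.comp q‖ :=
      ContinuousLinearMap.opNorm_smul_le ((‖q x‖)⁻¹) (g.comp q)
    have hnn : ‖(‖q x‖)⁻¹‖ = (‖q x‖)⁻¹ := Real.norm_of_nonneg (inv_nonneg.mpr (norm_nonneg _))
    have h1 : ‖(‖q x‖)⁻¹ • (g.comp q)‖ ≤ (‖q x‖)⁻¹ * (‖g‖ * ‖q‖) := by
      rw [hnn] at h0
      refine h0.trans ?_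
      exact mul_le_mul_of_nonneg_left (g.opNorm_comp_le q) (inv_nonneg.mpr (norm_nonneg _))
    have h2 : (‖q x‖)⁻¹ * (‖g‖ * ‖q‖) ≤ d⁻¹ := by
      have := norm_mkQc_le F
      rw [hg1, one_mul]
      calc (‖q x‖)⁻¹ * ‖q‖ ≤ (‖q x‖)⁻¹ * 1 :=
            mul_le_mul_of_nonneg_left (norm_mkQc_le F) (inv_nonneg.mpr (norm_nonneg _))
        _ = (‖q x‖)⁻¹ := mul_one _
        _ ≤ d⁻¹ := inv_anti₀ hd hqx
    linarith
  · intro v hv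
    have : q v = 0 := by
      rw [mkQc_apply]
      exact (Submodule.Quotient.mk_eq_zero F).mpr hv
    simp [this]

/-- closed ⊔ finite-dimensional is closed -/
lemma isClosed_sup_of_finiteDimensional (A F : Submodule ℝ X) (hA : IsClosed (A : Set X))
    [FiniteDimensional ℝ F] : IsClosed ((A ⊔ F : Submodule ℝ X) : Set X) := by
  letI : NormedAddCommGroup (X ⧸ A) := Submodule.Quotient.normedAddCommGroup A (hS := hA)
  have h1 : (A ⊔ F : Submodule ℝ X) = Submodule.comap (mkQc A : X →ₗ[ℝ] (X ⧸ A)) (Submodule.map (mkQc A : X →ₗ[ℝ] (X ⧸ A)) F) := by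
    have : Submodule.comap (mkQc A : X →ₗ[ℝ] (X ⧸ A)) (Submodule.map (mkQc A : X →ₗ[ℝ] (X ⧸ A)) F)
        = Submodule.comap A.mkQ (Submodule.map A.mkQ F) := rfl
    rw [this, Submodule.comap_map_eq, Submodule.ker_mkQ, sup_comm]
  haveI : FiniteDimensional ℝ (Submodule.map (mkQc A : X →ₗ[ℝ] (X ⧸ A)) F) :=
    Module.Finite.map F (mkQc A : X →ₗ[ℝ] (X ⧸ A))
  have h2 : IsClosed ((Submodule.map (mkQc A : X →ₗ[ℝ] (X ⧸ A)) F : Submodule ℝ (X ⧸ A)) : Set (X ⧸ A)) :=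
    Submodule.closed_of_finiteDimensional _
  rw [h1]
  exact h2.preimage (mkQc A).continuous


end Aux

section Aux2

variable {X : Type*} [NormedAddCommGroup X] [NormedSpace ℝ X] [CompleteSpace X]

/-- If the gap between A and N' is positive then A + N' is closed; contrapositive. -/
lemma gap_lemma (A N' : Submodule ℝ X) (hA : IsClosed (A : Set X)) (hN : IsClosed (N' : Set X))
    (h : ¬IsClosed ((A ⊔ N' : Submodule ℝ X) : Set X)) {ε : ℝ} (hε : 0 < ε) :
    ∃ x ∈ A, ‖x‖ = 1 ∧ ∃ y ∈ N', ‖x - y‖ < ε := by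
  by_contra hcon
  push_neg at hcon
  -- scale-invariant bound
  have hbound : ∀ a ∈ A, ∀ y ∈ N', ε * ‖a‖ ≤ ‖a - y‖ := by
    intro a ha y hy
    rcases eq_or_ne a 0 with rfl | ha0
    · simpa using mul_nonneg hε.le (norm_nonneg (0 - y))
    · have hna : 0 < ‖a‖ := norm_pos_iff.mpr ha0
      have hu : (‖a‖⁻¹ • a) ∈ A := A.smul_mem _ ha
      have hu1 : ‖(‖a‖⁻¹ • a)‖ = 1 := by
        rw [norm_smul, Real.norm_eq_abs, abs_of_nonneg (inv_nonneg.mpr (norm_nonneg a))]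
        field_simp
      have hy' : (‖a‖⁻¹ • y) ∈ N' := N'.smul_mem _ hy
      have := hcon _ hu hu1 _ hy'
      have heq : ‖(‖a‖⁻¹ • a) - (‖a‖⁻¹ • y)‖ = ‖a‖⁻¹ * ‖a - y‖ := by
        rw [← smul_sub, norm_smul, Real.norm_eq_abs,
          abs_of_nonneg (inv_nonneg.mpr (norm_nonneg a))]
      rw [heq] at this
      rw [mul_comm]
      calc ‖a‖ * ε ≤ ‖a‖ * (‖a‖⁻¹ * ‖a - y‖) := by
            exact mul_le_mul_of_nonneg_left this (norm_nonneg a)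
        _ = ‖a - y‖ := by field_simp
  -- the sum map
  apply h
  set T : (A × N') →L[ℝ] X := A.subtypeL.coprod N'.subtypeL with hT
  have hTapp : ∀ p : A × N', T p = (p.1 : X) + (p.2 : X) := fun p => rfl
  have hanti : AntilipschitzWith ⟨1 + ε⁻¹, by positivity⟩ T := by
    apply T.antilipschitz_of_bound
    intro p
    obtain ⟨a, b⟩ := p
    have h1 : ε * ‖(a:X)‖ ≤ ‖(a:X) + (b:X)‖ := by
      have := hbound a a.2 (-(b:X)) (N'.neg_mem b.2)
      simpa [sub_neg_eq_add] using this
    have ha : ‖(a:X)‖ ≤ ε⁻¹ * ‖(a:X) + (b:X)‖ := by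
      rw [← le_inv_mul_iff₀ hε] at h1
      exact h1
    have hb : ‖(b:X)‖ ≤ (1 + ε⁻¹) * ‖(a:X) + (b:X)‖ := by
      have : ‖(b:X)‖ ≤ ‖(a:X) + (b:X)‖ + ‖(a:X)‖ := by
        have h' := norm_add_le ((a:X) + (b:X)) (-(a:X))
        simpa [add_comm] using h'
      calc ‖(b:X)‖ ≤ ‖(a:X) + (b:X)‖ + ‖(a:X)‖ := this
        _ ≤ ‖(a:X) + (b:X)‖ + ε⁻¹ * ‖(a:X) + (b:X)‖ := by linarith
        _ = (1 + ε⁻¹) * ‖(a:X) + (b:X)‖ := by ring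
    have hnp : ‖(a, b)‖ = max ‖a‖ ‖b‖ := rfl
    rw [hTapp]
    simp only [NNReal.coe_mk]
    rw [hnp]
    have hca : ‖a‖ = ‖(a:X)‖ := rfl
    have hcb : ‖b‖ = ‖(b:X)‖ := rfl
    rw [hca, hcb]
    apply max_le
    · calc ‖(a:X)‖ ≤ ε⁻¹ * ‖(a:X) + (b:X)‖ := ha
        _ ≤ (1 + ε⁻¹) * ‖(a:X) + (b:X)‖ := by
            apply mul_le_mul_of_nonneg_right _ (norm_nonneg _); linarith
    · exact hb
  haveI : CompleteSpace A := hA.isComplete.completeSpace_coe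
  haveI : CompleteSpace N' := hN.isComplete.completeSpace_coe
  have hclosed : IsClosed (Set.range T) :=
    (hanti.isClosedEmbedding T.uniformContinuous).isClosed_range
  have hrange : Set.range T = ((A ⊔ N' : Submodule ℝ X) : Set X) := by
    ext z
    constructor
    · rintro ⟨⟨a, b⟩, rfl⟩
      rw [hTapp]
      exact Submodule.add_mem_sup a.2 b.2
    · intro hz
      obtain ⟨a, ha, b, hb, rfl⟩ := Submodule.mem_sup.mp hz
      exact ⟨(⟨a, ha⟩, ⟨b, hb⟩), rfl⟩
  rwa [hrange] at hclosed

lemma step_lemma (M N : Submodule ℝ X) (hMc : IsClosed (M : Set X)) (hNc : IsClosed (N : Set X))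
    (hsum : ¬IsClosed ((M ⊔ N : Submodule ℝ X) : Set X)) (n : ℕ)
    (x : ℕ → X) (f : ℕ → X →L[ℝ] ℝ)
    (hxM : ∀ m, m < n → x m ∈ M) (hx1 : ∀ m, m < n → ‖x m‖ = 1)
    (hf : ∀ j, j < n → ∀ m, m < n → f j (x m) = if j = m then 1 else 0)
    (hfn : ∀ m, m < n → ‖f m‖ ≤ 3 ^ m) :
    ∃ (x' y' : X) (f' : X →L[ℝ] ℝ), x' ∈ M ∧ ‖x'‖ = 1 ∧ y' ∈ N ∧
      (∀ m, m < n → f m x' = 0) ∧ (∀ m, m < n → f' (x m) = 0) ∧ f' x' = 1 ∧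
      ‖f'‖ ≤ 3 ^ n ∧ ‖f'‖ * ‖y' - x'‖ ≤ (2⁻¹ : ℝ) ^ (n + 2) := by
  classical
  -- the restricted subspace
  set A : Submodule ℝ X := M ⊓ ⨅ i : Fin n, LinearMap.ker (f i : X →ₗ[ℝ] ℝ) with hA
  have hAc : IsClosed (A : Set X) := by
    rw [hA, Submodule.coe_inf, Submodule.coe_iInf]
    exact hMc.inter (isClosed_iInter fun i => ContinuousLinearMap.isClosed_ker (f i))
  have hAmem : ∀ z, z ∈ A ↔ z ∈ M ∧ ∀ i : Fin n, f i z = 0 := by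
    intro z
    simp [hA, Submodule.mem_inf, Submodule.mem_iInf, LinearMap.mem_ker]
  -- the finite-dimensional span
  set F : Submodule ℝ X := Submodule.span ℝ (Set.range fun i : Fin n => x i) with hF
  haveI hFfin : FiniteDimensional ℝ F := by
    apply FiniteDimensional.span_of_finite
    exact Set.finite_range _
  have hFM : F ≤ M := by
    rw [hF, Submodule.span_le]
    rintro z ⟨i, rfl⟩
    exact hxM i i.2
  -- A ⊔ N is not closed
  have hAN : ¬IsClosed ((A ⊔ N : Submodule ℝ X) : Set X) := by
    intro hcl
    apply hsum
    have heq : M ⊔ N = (A ⊔ N) ⊔ F := by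
      apply le_antisymm
      · apply sup_le
        · intro z hz
          have hw : z - ∑ i : Fin n, f i z • x i ∈ A := by
            rw [hAmem]
            constructor
            · exact sub_mem hz (Submodule.sum_mem M fun i _ => M.smul_mem _ (hxM i i.2))
            · intro j
              rw [map_sub, map_sum]
              have : ∀ i : Fin n, f j (f i z • x i) = f i z * (if (j:ℕ) = (i:ℕ) then 1 else 0) := by
                intro i
                rw [map_smul, smul_eq_mul, hf j j.2 i i.2]
              rw [Finset.sum_congr rfl (fun i _ => this i)]
              rw [Finset.sum_eq_single j]
              · simp
              · intro b _ hb
                have : (j:ℕ) ≠ (b:ℕ) := fun h => hb (Fin.val_injective h).symm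
                simp [this]
              · intro h; exact absurd (Finset.mem_univ j) h
          have hsumF : ∑ i : Fin n, f i z • x i ∈ F := by
            apply Submodule.sum_mem
            intro i _
            exact F.smul_mem _ (Submodule.subset_span ⟨i, rfl⟩)
          have : z = (z - ∑ i : Fin n, f i z • x i) + ∑ i : Fin n, f i z • x i := by abel
          rw [this]
          exact Submodule.add_mem _ (Submodule.mem_sup_left (Submodule.mem_sup_left hw))
            (Submodule.mem_sup_right hsumF)
        · exact le_sup_of_le_left le_sup_right
      · refine sup_le (sup_le ?_ le_sup_right) (hFM.trans le_sup_left)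
        exact (inf_le_left : A ≤ M).trans le_sup_left
    rw [heq]
    exact isClosed_sup_of_finiteDimensional (A ⊔ N) F hcl
  -- pick x' close to N
  have h3pos : (0:ℝ) < 3 ^ n := by positivity
  set ε : ℝ := (2⁻¹ : ℝ) ^ (n + 2) / 3 ^ n with hε
  have hεpos : 0 < ε := by positivity
  obtain ⟨x', hx'A, hx'1, y', hy'N, hxy⟩ := gap_lemma A N hAc hNc hAN hεpos
  have hx'M : x' ∈ M := ((hAmem x').mp hx'A).1
  have hx'ker : ∀ i : Fin n, f i x' = 0 := ((hAmem x').mp hx'A).2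
  -- distance from x' to F
  have hdist : ∀ v ∈ F, ((3:ℝ) ^ n)⁻¹ ≤ ‖x' - v‖ := by
    intro v hv
    obtain ⟨c, hc⟩ := (Submodule.mem_span_range_iff_exists_fun ℝ).mp hv
    have ht0 : (0:ℝ) ≤ ‖x' - v‖ := norm_nonneg _
    have hci : ∀ i : Fin n, |c i| ≤ 3 ^ (i:ℕ) * ‖x' - v‖ := by
      intro i
      have h1 : f i (x' - v) = -c i := by
        rw [map_sub, hx'ker i, ← hc, map_sum]
        have : ∀ j : Fin n, f i (c j • x j) = c j * (if (i:ℕ) = (j:ℕ) then 1 else 0) := by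
          intro j
          rw [map_smul, smul_eq_mul, hf i i.2 j j.2]
        rw [Finset.sum_congr rfl (fun j _ => this j), Finset.sum_eq_single i]
        · simp
        · intro b _ hb
          have : (i:ℕ) ≠ (b:ℕ) := fun h => hb (Fin.val_injective h).symm
          simp [this]
        · intro h; exact absurd (Finset.mem_univ i) h
      have h2 : |c i| = |f i (x' - v)| := by rw [h1, abs_neg]
      rw [h2]
      calc |f i (x' - v)| = ‖f i (x' - v)‖ := rfl
        _ ≤ ‖f i‖ * ‖x' - v‖ := (f i).le_opNorm _
        _ ≤ 3 ^ (i:ℕ) * ‖x' - v‖ := by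
            apply mul_le_mul_of_nonneg_right (hfn i i.2) ht0
    have hvnorm : ‖v‖ ≤ (∑ i : Fin n, (3:ℝ) ^ (i:ℕ)) * ‖x' - v‖ := by
      calc ‖v‖ = ‖∑ i : Fin n, c i • x i‖ := by rw [hc]
        _ ≤ ∑ i : Fin n, ‖c i • x i‖ := norm_sum_le _ _
        _ = ∑ i : Fin n, |c i| := by
            apply Finset.sum_congr rfl
            intro i _
            rw [norm_smul, Real.norm_eq_abs, hx1 i i.2, mul_one]
        _ ≤ ∑ i : Fin n, (3:ℝ) ^ (i:ℕ) * ‖x' - v‖ := Finset.sum_le_sum fun i _ => hci i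
        _ = (∑ i : Fin n, (3:ℝ) ^ (i:ℕ)) * ‖x' - v‖ := by rw [← Finset.sum_mul]
    have hgeom : (∑ i : Fin n, (3:ℝ) ^ (i:ℕ)) = ((3:ℝ) ^ n - 1) / 2 := by
      rw [Fin.sum_univ_eq_sum_range]
      rw [geom_sum_eq (by norm_num : (3:ℝ) ≠ 1)]
      norm_num
    have h1n : 1 ≤ ‖x' - v‖ + ‖v‖ := by
      have := norm_add_le (x' - v) v
      simp only [sub_add_cancel] at this
      rw [hx'1] at this
      exact this
    have h3one : (1:ℝ) ≤ 3 ^ n := one_le_pow₀ (by norm_num)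
    have hmul : 1 ≤ 3 ^ n * ‖x' - v‖ := by
      rw [hgeom] at hvnorm
      nlinarith [mul_nonneg ht0 (sub_nonneg.mpr h3one)]
    rw [← one_div]
    rw [div_le_iff₀ h3pos]
    linarith [hmul, mul_comm ((3:ℝ)^n) ‖x' - v‖]
  -- the functional
  have hFc : IsClosed (F : Set X) := Submodule.closed_of_finiteDimensional F
  obtain ⟨f', hf'x, hf'n, hf'F⟩ := exists_functional F hFc x'
    (show (0:ℝ) < ((3:ℝ)^n)⁻¹ by positivity) hdist
  rw [inv_inv] at hf'n
  refine ⟨x', y', f', hx'M, hx'1, hy'N, ?_, ?_, hf'x, hf'n, ?_⟩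
  · intro m hm
    exact hx'ker ⟨m, hm⟩
  · intro m hm
    exact hf'F (x m) (Submodule.subset_span ⟨⟨m, hm⟩, rfl⟩)
  · have h1 : ‖y' - x'‖ ≤ ε := by
      rw [norm_sub_rev]
      exact hxy.le
    calc ‖f'‖ * ‖y' - x'‖ ≤ 3 ^ n * ε :=
          mul_le_mul hf'n h1 (norm_nonneg _) h3pos.le
      _ = (2⁻¹ : ℝ) ^ (n + 2) := by
          rw [hε]
          field_simp


end Aux2

lemma build_seq {α : Type*} [Inhabited α] (Inv : ℕ → (ℕ → α) → Prop)
    (h0 : Inv 0 fun _ => default)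
    (hmono : ∀ n (t t' : ℕ → α), (∀ m, m < n → t m = t' m) → Inv n t → Inv n t')
    (hstep : ∀ n t, Inv n t → ∃ t', (∀ m, m < n → t' m = t m) ∧ Inv (n + 1) t') :
    ∃ s : ℕ → α, ∀ n, Inv n s := by
  choose T hT1 hT2 using hstep
  let G : ∀ n : ℕ, {t : ℕ → α // Inv n t} :=
    fun n => Nat.rec ⟨fun _ => default, h0⟩ (fun n p => ⟨T n p.1 p.2, hT2 n p.1 p.2⟩) n
  have hGsucc : ∀ n, ∀ m, m < n → (G (n + 1)).1 m = (G n).1 m := fun n => hT1 n (G n).1 (G n).2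
  have key : ∀ k n, n ≤ k → ∀ m, m < n → (G k).1 m = (G n).1 m := by
    intro k
    induction k with
    | zero => intro n hn m hm; omega
    | succ k ih =>
      intro n hn m hm
      rcases Nat.lt_succ_iff_lt_or_eq.mp (Nat.lt_succ_of_le hn) with h | h
      · have hnk : n ≤ k := Nat.lt_succ_iff.mp h
        have h1 : (G (k + 1)).1 m = (G k).1 m := hGsucc k m (lt_of_lt_of_le hm hnk)
        rw [h1]
        exact ih n hnk m hm
      · subst h; rfl
  refine ⟨fun m => (G (m + 1)).1 m, fun n => ?_⟩
  refine hmono n (G n).1 _ (fun m hm => ?_) (G n).2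
  exact key n (m + 1) hm m (Nat.lt_succ_self m)


/-- if `M`, `N` are closed subspaces of a Banach space `X` with
`M ∩ N = 0` and `M + N` not closed, there is an automorphism `U` of `X` such that
`U(M) ∩ N` is infinite-dimensional. -/
theorem stmt1 {X : Type*} [NormedAddCommGroup X] [NormedSpace ℝ X] [CompleteSpace X]
    (M N : Submodule ℝ X) (hMc : IsClosed (M : Set X)) (hNc : IsClosed (N : Set X))
    (hMN : M ⊓ N = ⊥) (hsum : ¬IsClosed ((M ⊔ N : Submodule ℝ X) : Set X)) :
    ∃ U : X ≃L[ℝ] X,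
      ¬FiniteDimensional ℝ ↥(M.map ((U : X →L[ℝ] X) : X →ₗ[ℝ] X) ⊓ N) := by
  classical
  letI : Inhabited (X × X × (X →L[ℝ] ℝ)) := ⟨(0, 0, 0)⟩
  set Inv : ℕ → (ℕ → X × X × (X →L[ℝ] ℝ)) → Prop := fun n t =>
    ∀ m, m < n → (t m).1 ∈ M ∧ ‖(t m).1‖ = 1 ∧ (t m).2.1 ∈ N ∧
      ‖(t m).2.2‖ ≤ 3 ^ m ∧ ‖(t m).2.2‖ * ‖(t m).2.1 - (t m).1‖ ≤ (2⁻¹ : ℝ) ^ (m + 2) ∧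
      ∀ j, j < n → (t j).2.2 ((t m).1) = if j = m then 1 else 0 with hInvdef
  have hInv0 : Inv 0 fun _ => default := fun m hm => absurd hm (Nat.not_lt_zero m)
  have hInvmono : ∀ n (t t' : ℕ → X × X × (X →L[ℝ] ℝ)),
      (∀ m, m < n → t m = t' m) → Inv n t → Inv n t' := by
    intro n t t' he h m hm
    obtain ⟨h1, h2, h3, h4, h5, h6⟩ := h m hm
    rw [he m hm] at h1 h2 h3 h4 h5
    refine ⟨h1, h2, h3, h4, h5, fun j hj => ?_⟩
    rw [← he j hj, ← he m hm]
    exact h6 j hj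
  have hInvstep : ∀ n t, Inv n t → ∃ t', (∀ m, m < n → t' m = t m) ∧ Inv (n + 1) t' := by
    intro n t ht
    obtain ⟨x', y', f', hx'M, hx'1, hy'N, hold, hnew, hone, hf'b, hf'p⟩ :=
      step_lemma M N hMc hNc hsum n (fun m => (t m).1) (fun m => (t m).2.2)
        (fun m hm => (ht m hm).1) (fun m hm => (ht m hm).2.1)
        (fun j hj m hm => (ht m hm).2.2.2.2.2 j hj)
        (fun m hm => (ht m hm).2.2.2.1)
    refine ⟨Function.update t n (x', y', f'), fun m hm => Function.update_of_ne (by omega) _ t, ?_⟩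
    intro m hm
    rcases Nat.lt_succ_iff_lt_or_eq.mp hm with hm' | rfl
    · have hmne : m ≠ n := by omega
      rw [Function.update_of_ne hmne]
      obtain ⟨h1, h2, h3, h4, h5, h6⟩ := ht m hm'
      refine ⟨h1, h2, h3, h4, h5, fun j hj => ?_⟩
      rcases Nat.lt_succ_iff_lt_or_eq.mp hj with hj' | rfl
      · rw [Function.update_of_ne (by omega : j ≠ n)]
        exact h6 j hj'
      · rw [Function.update_self]
        have : j ≠ m := by omega
        simp only [this, if_false]
        exact hnew m hm'
    · rw [Function.update_self]
      refine ⟨hx'M, hx'1, hy'N, hf'b, hf'p, fun j hj => ?_⟩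
      rcases Nat.lt_succ_iff_lt_or_eq.mp hj with hj' | rfl
      · rw [Function.update_of_ne (by omega : j ≠ m)]
        have : j ≠ m := by omega
        simp only [this, if_false]
        exact hold j hj'
      · rw [Function.update_self]
        simp only [if_pos rfl]
        exact hone
  obtain ⟨s, hs⟩ := build_seq Inv hInv0 hInvmono hInvstep
  -- clean facts
  have hxM : ∀ n, (s n).1 ∈ M := fun n => (hs (n + 1) n (Nat.lt_succ_self n)).1
  have hx1 : ∀ n, ‖(s n).1‖ = 1 := fun n => (hs (n + 1) n (Nat.lt_succ_self n)).2.1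
  have hyN : ∀ n, (s n).2.1 ∈ N := fun n => (hs (n + 1) n (Nat.lt_succ_self n)).2.2.1
  have hprod : ∀ n, ‖(s n).2.2‖ * ‖(s n).2.1 - (s n).1‖ ≤ (2⁻¹ : ℝ) ^ (n + 2) :=
    fun n => (hs (n + 1) n (Nat.lt_succ_self n)).2.2.2.2.1
  have hdual : ∀ j m, (s j).2.2 ((s m).1) = if j = m then 1 else 0 := fun j m =>
    (hs (max j m + 1) m (by omega)).2.2.2.2.2 j (by omega)
  -- the perturbation
  set g : ℕ → X →L[ℝ] X := fun m => ((s m).2.2).smulRight ((s m).2.1 - (s m).1) with hgdef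
  have hgnorm : ∀ m, ‖g m‖ ≤ (2⁻¹ : ℝ) ^ (m + 2) := by
    intro m
    rw [hgdef]
    rw [ContinuousLinearMap.norm_smulRight_apply]
    exact hprod m
  have hgeo : Summable (fun m : ℕ => (2⁻¹ : ℝ) ^ (m + 2)) := by
    apply Summable.comp_injective (summable_geometric_of_lt_one (by norm_num) (by norm_num))
    exact fun a b hab => by omega
  have hsummable : Summable g :=
    Summable.of_norm (hgeo.of_nonneg_of_le (fun m => norm_nonneg _) hgnorm)
  set K : X →L[ℝ] X := ∑' m, g m with hKdef
  have hKnorm : ‖K‖ ≤ 2⁻¹ := by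
    have h1 : ‖K‖ ≤ ∑' m, ‖g m‖ :=
      norm_tsum_le_tsum_norm (hgeo.of_nonneg_of_le (fun m => norm_nonneg _) hgnorm)
    have h2 : ∑' m, ‖g m‖ ≤ ∑' m : ℕ, (2⁻¹ : ℝ) ^ (m + 2) :=
      Summable.tsum_le_tsum hgnorm (hgeo.of_nonneg_of_le (fun m => norm_nonneg _) hgnorm) hgeo
    have h3 : ∑' m : ℕ, (2⁻¹ : ℝ) ^ (m + 2) = 2⁻¹ := by
      have : ∀ m : ℕ, (2⁻¹ : ℝ) ^ (m + 2) = (2⁻¹:ℝ)^2 * (2⁻¹)^m := by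
        intro m; rw [pow_add, mul_comm]
      rw [tsum_congr this, tsum_mul_left, tsum_geometric_of_lt_one (by norm_num) (by norm_num)]
      norm_num
    linarith
  have hKlt : ‖-K‖ < 1 := by rw [norm_neg]; linarith
  set u : (X →L[ℝ] X)ˣ := Units.oneSub (-K) hKlt with hudef
  set U : X ≃L[ℝ] X := ContinuousLinearEquiv.unitsEquiv ℝ X u with hUdef
  have hUapp : ∀ z, U z = z + K z := by
    intro z
    rw [hUdef]
    rw [ContinuousLinearEquiv.unitsEquiv_apply]
    rw [hudef]
    show ((1 : X →L[ℝ] X) - (-K)) z = z + K z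
    simp [sub_eq_add_neg]
  -- K on the x sequence
  have hKx : ∀ n, K ((s n).1) = (s n).2.1 - (s n).1 := by
    intro n
    have happ : K ((s n).1) = ∑' m, g m ((s n).1) := by
      have := (ContinuousLinearMap.apply ℝ X ((s n).1)).map_tsum hsummable
      simpa using this
    rw [happ]
    have hterm : ∀ m, g m ((s n).1) = (if m = n then (1:ℝ) else 0) • ((s m).2.1 - (s m).1) := by
      intro m
      rw [hgdef]
      show (s m).2.2 ((s n).1) • ((s m).2.1 - (s m).1) = _
      rw [hdual m n]
    rw [tsum_congr hterm, tsum_eq_single n]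
    · simp
    · intro b hb
      simp [hb]
  have hUx : ∀ n, U ((s n).1) = (s n).2.1 := by
    intro n
    rw [hUapp, hKx]
    abel
  -- membership
  have hmem : ∀ n, (s n).2.1 ∈ (M.map ((U : X →L[ℝ] X) : X →ₗ[ℝ] X) ⊓ N) := by
    intro n
    rw [Submodule.mem_inf]
    refine ⟨Submodule.mem_map.mpr ⟨(s n).1, hxM n, ?_⟩, hyN n⟩
    show U ((s n).1) = _
    exact hUx n
  -- linear independence
  have hxind : LinearIndependent ℝ (fun n => (s n).1) := by
    rw [linearIndependent_iff']
    intro t c hc i hi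
    have := congrArg (s i).2.2 hc
    rw [map_sum, map_zero] at this
    have hterm : ∀ j ∈ t, (s i).2.2 (c j • (s j).1) = if j = i then c j else 0 := by
      intro j _
      rw [map_smul, smul_eq_mul, hdual i j]
      by_cases h : j = i
      · simp [h]
      · have : i ≠ j := fun hh => h hh.symm
        simp [h, this]
    rw [Finset.sum_congr rfl hterm, Finset.sum_ite_eq' t i c] at this
    rw [if_pos hi] at this
    exact this
  have hyind : LinearIndependent ℝ (fun n => (s n).2.1) := by
    have heq : (fun n => (s n).2.1) = fun n => U.toLinearEquiv.toLinearMap ((s n).1) := by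
      funext n
      exact (hUx n).symm
    rw [heq]
    exact hxind.map' U.toLinearEquiv.toLinearMap U.toLinearEquiv.ker
  refine ⟨U, fun hFD => ?_⟩
  set P : Submodule ℝ X := M.map ((U : X →L[ℝ] X) : X →ₗ[ℝ] X) ⊓ N with hPdef
  have hvind : LinearIndependent ℝ (fun n => (⟨(s n).2.1, hmem n⟩ : P)) := by
    apply LinearIndependent.of_comp P.subtype
    exact hyind
  haveI : Module.Finite ℝ P := hFD
  haveI : Finite ℕ := hvind.finite
  exact not_finite ℕ
end

section
/- Let X be a Banach space, (x_n) a bounded sequence in X, and (x_n*) a sequence in X* such that ⟨x_i*, x_j⟩ = δ_{ij} for all i, j and Σ_n ‖x_n*‖·‖x_n − y_n‖ < 1 for some sequence (y_n) in X. Then the map K(x) = Σ_n ⟨x_n*, x⟩ (x_n − y_n) defines a bounded operator on X with ‖K‖ < 1, and U = I − K is an automorphism of X with U(x_n) = y_n for every n. -/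
/-- small perturbation principle. Given a bounded sequence `(x_n)`,
biorthogonal functionals `(x_n*)` and a sequence `(y_n)` with
`Σ ‖x_n*‖‖x_n - y_n‖ < 1`, the map `K(x) = Σ ⟨x_n*, x⟩ (x_n - y_n)` is a bounded
operator with `‖K‖ < 1` and `U = I - K` is an automorphism with `U(x_n) = y_n`. -/
theorem stmt3 {X : Type*} [NormedAddCommGroup X] [NormedSpace ℝ X] [CompleteSpace X]
    (x y : ℕ → X) (hb : ∃ C : ℝ, ∀ n, ‖x n‖ ≤ C)
    (f : ℕ → X →L[ℝ] ℝ)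
    (hδ : ∀ i j, f i (x j) = if i = j then (1 : ℝ) else 0)
    (hsum : Summable fun n => ‖f n‖ * ‖x n - y n‖)
    (hlt : (∑' n, ‖f n‖ * ‖x n - y n‖) < 1) :
    ∃ K : X →L[ℝ] X, (∀ z, K z = ∑' n, f n z • (x n - y n)) ∧ ‖K‖ < 1 ∧
      ∃ U : X ≃L[ℝ] X, (∀ z, U z = z - K z) ∧ ∀ n, U (x n) = y n := by
  set s := ∑' n, ‖f n‖ * ‖x n - y n‖ with hs
  have key : ∀ z : X, ∀ n, ‖f n z • (x n - y n)‖ ≤ (‖f n‖ * ‖x n - y n‖) * ‖z‖ := by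
    intro z n
    rw [norm_smul]
    calc ‖f n z‖ * ‖x n - y n‖ ≤ (‖f n‖ * ‖z‖) * ‖x n - y n‖ := by
          gcongr; exact (f n).le_opNorm z
      _ = (‖f n‖ * ‖x n - y n‖) * ‖z‖ := by ring
  have hnz : ∀ z : X, Summable fun n => ‖f n z • (x n - y n)‖ := fun z =>
    (hsum.mul_right ‖z‖).of_nonneg_of_le (fun n => norm_nonneg _) (key z)
  have hsz : ∀ z : X, Summable fun n => f n z • (x n - y n) := fun z =>
    Summable.of_norm_bounded (hsum.mul_right ‖z‖) (key z)
  have hK : ∀ z : X, ‖∑' n, f n z • (x n - y n)‖ ≤ s * ‖z‖ := by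
    intro z
    calc ‖∑' n, f n z • (x n - y n)‖ ≤ ∑' n, ‖f n z • (x n - y n)‖ :=
          norm_tsum_le_tsum_norm (hnz z)
      _ ≤ ∑' n, (‖f n‖ * ‖x n - y n‖) * ‖z‖ :=
          Summable.tsum_le_tsum (key z) (hnz z) (hsum.mul_right ‖z‖)
      _ = s * ‖z‖ := by rw [tsum_mul_right]
  let K : X →L[ℝ] X := LinearMap.mkContinuous
    { toFun := fun z => ∑' n, f n z • (x n - y n)
      map_add' := by
        intro a b
        rw [← Summable.tsum_add (hsz a) (hsz b)]
        exact tsum_congr fun n => by rw [map_add, add_smul]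
      map_smul' := by
        intro c a
        simp only [RingHom.id_apply]
        rw [show (fun n => f n (c • a) • (x n - y n))
            = fun n => c • (f n a • (x n - y n)) by
          funext n; rw [map_smul]; simp [smul_smul]]
        exact ((hsz a).hasSum.const_smul c).tsum_eq } s hK
  have hKapp : ∀ z, K z = ∑' n, f n z • (x n - y n) := fun z => rfl
  have hs0 : (0:ℝ) ≤ s := tsum_nonneg fun n => mul_nonneg (norm_nonneg _) (norm_nonneg _)
  have hKlt : ‖K‖ < 1 := lt_of_le_of_lt (K.opNorm_le_bound hs0 hK) hlt
  have hKx : ∀ n, K (x n) = x n - y n := by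
    intro n
    rw [hKapp]
    rw [tsum_eq_single n]
    · rw [hδ n n]; simp
    · intro m hm
      rw [hδ m n, if_neg hm, zero_smul]
  refine ⟨K, hKapp, hKlt, ?_⟩
  refine ⟨ContinuousLinearEquiv.ofUnit (Units.oneSub K hKlt), ?_, ?_⟩
  · intro z
    show ((Units.oneSub K hKlt : (X →L[ℝ] X)ˣ) : X →L[ℝ] X) z = z - K z
    simp [Units.oneSub]
  · intro n
    show ((Units.oneSub K hKlt : (X →L[ℝ] X)ˣ) : X →L[ℝ] X) (x n) = y n
    simp [Units.oneSub, hKx n]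
end

section
/- Let I ⊆ ℕ be an interval, x = (x_n) ∈ Π with x_n = 0 for every n ∉ I, let m < min I, and let S be a finite nonempty subset of ℕ_0. Then ρ(x,S) ≤ ρ(x, {m} ∪ (S ∩ I)). -/
open Filter Topology

/-- Composition `φ_n^m = φ_{m-1} ∘ ⋯ ∘ φ_n : X n →L X m` (junk value for `m < n`). -/
noncomputable def phiTo {X : ℕ → Type*} [∀ n, NormedAddCommGroup (X n)]
    [∀ n, NormedSpace ℝ (X n)] (φ : ∀ n, X n →L[ℝ] X (n + 1)) (n : ℕ) :
    (m : ℕ) → X n →L[ℝ] X m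
  | 0 => 0
  | m + 1 =>
    if h : m + 1 = n then by rw [h]; exact ContinuousLinearMap.id ℝ (X n)
    else (φ m).comp (phiTo φ n m)

open Classical in
/-- `σ(x,S)²`: the sum over consecutive pairs `p < q` of `S` of `‖φ_p^q(x_p) - x_q‖²`. -/
noncomputable def sigma2 {X : ℕ → Type*} [∀ n, NormedAddCommGroup (X n)]
    [∀ n, NormedSpace ℝ (X n)] (φ : ∀ n, X n →L[ℝ] X (n + 1))
    (x : ∀ n, X n) (S : Finset ℕ) : ℝ :=
  ∑ p ∈ S, ∑ q ∈ S,
    if p < q ∧ ∀ r ∈ S, ¬(p < r ∧ r < q) then ‖phiTo φ p q (x p) - x q‖ ^ 2 else 0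

noncomputable def sigmaJ {X : ℕ → Type*} [∀ n, NormedAddCommGroup (X n)]
    [∀ n, NormedSpace ℝ (X n)] (φ : ∀ n, X n →L[ℝ] X (n + 1))
    (x : ∀ n, X n) (S : Finset ℕ) : ℝ :=
  Real.sqrt (sigma2 φ x S)

/-- `ρ(x,S)² = σ(x,S)² + ‖x_{max S}‖²`. -/
noncomputable def rho2 {X : ℕ → Type*} [∀ n, NormedAddCommGroup (X n)]
    [∀ n, NormedSpace ℝ (X n)] (φ : ∀ n, X n →L[ℝ] X (n + 1))
    (x : ∀ n, X n) (S : Finset ℕ) (hS : S.Nonempty) : ℝ :=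
  sigma2 φ x S + ‖x (S.max' hS)‖ ^ 2

noncomputable def rhoJ {X : ℕ → Type*} [∀ n, NormedAddCommGroup (X n)]
    [∀ n, NormedSpace ℝ (X n)] (φ : ∀ n, X n →L[ℝ] X (n + 1))
    (x : ∀ n, X n) (S : Finset ℕ) (hS : S.Nonempty) : ℝ :=
  Real.sqrt (rho2 φ x S hS)

/-- The set of values `ρ(x,S)` over finite nonempty `S ⊆ ℕ`. -/
def rhoSet {X : ℕ → Type*} [∀ n, NormedAddCommGroup (X n)]
    [∀ n, NormedSpace ℝ (X n)] (φ : ∀ n, X n →L[ℝ] X (n + 1))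
    (x : ∀ n, X n) : Set ℝ :=
  {r : ℝ | ∃ (S : Finset ℕ) (hS : S.Nonempty), r = rhoJ φ x S hS}

/-- Membership in `Ĵ(Φ)`: `sup_S ρ(x,S) < ∞`. -/
def memJhat {X : ℕ → Type*} [∀ n, NormedAddCommGroup (X n)]
    [∀ n, NormedSpace ℝ (X n)] (φ : ∀ n, X n →L[ℝ] X (n + 1))
    (x : ∀ n, X n) : Prop :=
  BddAbove (rhoSet φ x)

/-- The norm `‖x‖_J = (1/√2) sup_S ρ(x,S)`. -/
noncomputable def normJ {X : ℕ → Type*} [∀ n, NormedAddCommGroup (X n)]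
    [∀ n, NormedSpace ℝ (X n)] (φ : ∀ n, X n →L[ℝ] X (n + 1))
    (x : ∀ n, X n) : ℝ :=
  (Real.sqrt 2)⁻¹ * sSup (rhoSet φ x)

/-- Membership in `J(Φ)`: member of `Ĵ(Φ)` with `‖x_n‖ → 0`. -/
def memJ {X : ℕ → Type*} [∀ n, NormedAddCommGroup (X n)]
    [∀ n, NormedSpace ℝ (X n)] (φ : ∀ n, X n →L[ℝ] X (n + 1))
    (x : ∀ n, X n) : Prop :=
  memJhat φ x ∧ Tendsto (fun n => ‖x n‖) atTop (𝓝 0)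

open Classical in
/-- The coordinate restriction `P_I`. -/
noncomputable def restrictSeq {X : ℕ → Type*} [∀ n, NormedAddCommGroup (X n)]
    (I : Set ℕ) (x : ∀ n, X n) : ∀ n, X n :=
  fun n => if n ∈ I then x n else 0

/-- The stepping map `Q_α`. -/
noncomputable def stepSeq {X : ℕ → Type*} [∀ n, NormedAddCommGroup (X n)]
    [∀ n, NormedSpace ℝ (X n)] (φ : ∀ n, X n →L[ℝ] X (n + 1))
    (α : ℕ → ℕ) (x : ∀ n, X n) : ∀ n, X n :=
  fun n => phiTo φ (α n) n (x (α n))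


section StmtSixAux

variable {X : ℕ → Type*} [∀ n, NormedAddCommGroup (X n)] [∀ n, NormedSpace ℝ (X n)]
variable (φ : ∀ n, X n →L[ℝ] X (n + 1))

lemma phiTo_norm_le (hφ : ∀ n, ‖φ n‖ ≤ 1) (n : ℕ) (y : X n) (m : ℕ) :
    ‖phiTo φ n m y‖ ≤ ‖y‖ := by
  induction m with
  | zero => simp [phiTo]
  | succ k ih =>
    rw [phiTo]
    split_ifs with h
    · subst h; exact le_refl _
    · refine le_trans ((φ k).le_opNorm _) ?_
      refine le_trans (mul_le_mul_of_nonneg_right (hφ k) (norm_nonneg _)) ?_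
      simpa using ih

lemma sigma2_eq_zero (x : ∀ n, X n) (S : Finset ℕ) (h : ∀ n ∈ S, x n = 0) :
    sigma2 φ x S = 0 := by
  classical
  refine Finset.sum_eq_zero fun p hp => Finset.sum_eq_zero fun q hq => ?_
  split_ifs with hc
  · rw [h p hp, h q hq, map_zero, sub_zero, norm_zero]; ring
  · rfl

lemma sigma2_singleton (x : ∀ n, X n) (p : ℕ) : sigma2 φ x {p} = 0 := by
  simp [sigma2]

lemma sigma2_union (x : ∀ n, X n) (A B : Finset ℕ) (hA : A.Nonempty) (hB : B.Nonempty)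
    (hAB : ∀ p ∈ A, ∀ q ∈ B, p < q) :
    sigma2 φ x (A ∪ B) =
      sigma2 φ x A
        + ‖phiTo φ (A.max' hA) (B.min' hB) (x (A.max' hA)) - x (B.min' hB)‖ ^ 2
        + sigma2 φ x B := by
  classical
  have hd : Disjoint A B := by
    rw [Finset.disjoint_left]
    intro p hpA hpB
    exact absurd (hAB p hpA p hpB) (lt_irrefl p)
  set a0 := A.max' hA with ha0
  set b0 := B.min' hB with hb0
  have ha0A : a0 ∈ A := A.max'_mem hA
  have hb0B : b0 ∈ B := B.min'_mem hB
  unfold sigma2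
  rw [Finset.sum_union hd]
  have hsplit : ∀ p : ℕ,
      (∑ q ∈ A ∪ B, if p < q ∧ ∀ r ∈ A ∪ B, ¬(p < r ∧ r < q)
          then ‖phiTo φ p q (x p) - x q‖ ^ 2 else 0)
      = (∑ q ∈ A, if p < q ∧ ∀ r ∈ A ∪ B, ¬(p < r ∧ r < q)
          then ‖phiTo φ p q (x p) - x q‖ ^ 2 else 0)
        + (∑ q ∈ B, if p < q ∧ ∀ r ∈ A ∪ B, ¬(p < r ∧ r < q)
          then ‖phiTo φ p q (x p) - x q‖ ^ 2 else 0) := by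
    intro p; rw [Finset.sum_union hd]
  simp only [hsplit, Finset.sum_add_distrib]
  have key1 : (∑ p ∈ A, ∑ q ∈ A, if p < q ∧ ∀ r ∈ A ∪ B, ¬(p < r ∧ r < q)
      then ‖phiTo φ p q (x p) - x q‖ ^ 2 else 0) = sigma2 φ x A := by
    unfold sigma2
    refine Finset.sum_congr rfl fun p hp => Finset.sum_congr rfl fun q hq => ?_
    refine if_congr (and_congr_right fun _ => ?_) rfl rfl
    constructor
    · intro h r hr hbet
      exact h r (Finset.mem_union_left _ hr) hbet
    · intro h r hr hbet
      rcases Finset.mem_union.mp hr with h' | h'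
      · exact h r h' hbet
      · exact absurd hbet.2 (lt_asymm (hAB q hq r h'))
  have key2 : (∑ p ∈ B, ∑ q ∈ B, if p < q ∧ ∀ r ∈ A ∪ B, ¬(p < r ∧ r < q)
      then ‖phiTo φ p q (x p) - x q‖ ^ 2 else 0) = sigma2 φ x B := by
    unfold sigma2
    refine Finset.sum_congr rfl fun p hp => Finset.sum_congr rfl fun q hq => ?_
    refine if_congr (and_congr_right fun _ => ?_) rfl rfl
    constructor
    · intro h r hr hbet
      exact h r (Finset.mem_union_right _ hr) hbet
    · intro h r hr hbet
      rcases Finset.mem_union.mp hr with h' | h'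
      · exact absurd hbet.1 (lt_asymm (hAB r h' p hp))
      · exact h r h' hbet
  have key3 : (∑ p ∈ B, ∑ q ∈ A, if p < q ∧ ∀ r ∈ A ∪ B, ¬(p < r ∧ r < q)
      then ‖phiTo φ p q (x p) - x q‖ ^ 2 else 0) = 0 := by
    refine Finset.sum_eq_zero fun p hp => Finset.sum_eq_zero fun q hq => ?_
    exact if_neg (fun hc => lt_asymm (hAB q hq p hp) hc.1)
  have key4 : (∑ p ∈ A, ∑ q ∈ B, if p < q ∧ ∀ r ∈ A ∪ B, ¬(p < r ∧ r < q)
      then ‖phiTo φ p q (x p) - x q‖ ^ 2 else 0)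
      = ‖phiTo φ a0 b0 (x a0) - x b0‖ ^ 2 := by
    have hcond : ∀ p ∈ A, ∀ q ∈ B,
        ((p < q ∧ ∀ r ∈ A ∪ B, ¬(p < r ∧ r < q)) ↔ (p = a0 ∧ q = b0)) := by
      intro p hp q hq
      constructor
      · rintro ⟨hpq, hno⟩
        constructor
        · by_contra hne
          exact hno a0 (Finset.mem_union_left _ ha0A)
            ⟨lt_of_le_of_ne (A.le_max' p hp) hne, hAB _ ha0A q hq⟩
        · by_contra hne
          exact hno b0 (Finset.mem_union_right _ hb0B)
            ⟨hAB p hp b0 hb0B, lt_of_le_of_ne (B.min'_le q hq) (Ne.symm hne)⟩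
      · rintro ⟨rfl, rfl⟩
        refine ⟨hAB _ hp _ hq, fun r hr hbet => ?_⟩
        rcases Finset.mem_union.mp hr with h' | h'
        · exact absurd hbet.1 (not_lt.mpr (A.le_max' r h'))
        · exact absurd hbet.2 (not_lt.mpr (B.min'_le r h'))
    have step1 : ∀ p ∈ A,
        (∑ q ∈ B, if p < q ∧ ∀ r ∈ A ∪ B, ¬(p < r ∧ r < q)
          then ‖phiTo φ p q (x p) - x q‖ ^ 2 else 0)
        = if p = a0 then ‖phiTo φ p b0 (x p) - x b0‖ ^ 2 else 0 := by
      intro p hp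
      have heq : (∑ q ∈ B, if p < q ∧ ∀ r ∈ A ∪ B, ¬(p < r ∧ r < q)
          then ‖phiTo φ p q (x p) - x q‖ ^ 2 else 0)
          = ∑ q ∈ B, if p = a0 ∧ q = b0 then ‖phiTo φ p q (x p) - x q‖ ^ 2 else 0 :=
        Finset.sum_congr rfl fun q hq => if_congr (hcond p hp q hq) rfl rfl
      rw [heq, Finset.sum_eq_single b0]
      · by_cases h1 : p = a0 <;> simp [h1]
      · intro q hq hne
        exact if_neg (fun hc => hne hc.2)
      · intro hb; exact absurd hb0B hb
    rw [Finset.sum_congr rfl step1, Finset.sum_eq_single a0]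
    · rw [if_pos rfl]
    · intro p hp hne; exact if_neg hne
    · intro ha; exact absurd ha0A ha
  rw [key1, key2, key3, key4]
  unfold sigma2
  ring

lemma sigma2_insert_lt (x : ∀ n, X n) (B : Finset ℕ) (hB : B.Nonempty) (p : ℕ)
    (hp : ∀ q ∈ B, p < q) :
    sigma2 φ x (insert p B)
      = ‖phiTo φ p (B.min' hB) (x p) - x (B.min' hB)‖ ^ 2 + sigma2 φ x B := by
  rw [Finset.insert_eq,
    sigma2_union φ x {p} B ⟨p, Finset.mem_singleton_self p⟩ hB (by simpa using hp)]
  have h1 : ({p} : Finset ℕ).max' ⟨p, Finset.mem_singleton_self p⟩ = p :=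
    Finset.max'_singleton p
  rw [h1, sigma2_singleton]
  ring

lemma rho2_eq_of_eq (x : ∀ n, X n) {S T : Finset ℕ} (h : S = T) (hS : S.Nonempty)
    (hT : T.Nonempty) : rho2 φ x S hS = rho2 φ x T hT := by
  subst h; rfl

end StmtSixAux

open Classical in
/-- if `x` is supported in an interval `I ⊆ ℕ` and `m < min I`, then
`ρ(x,S) ≤ ρ(x, {m} ∪ (S ∩ I))` for every finite nonempty `S`. -/
theorem stmt6 {X : ℕ → Type*} [∀ n, NormedAddCommGroup (X n)] [∀ n, NormedSpace ℝ (X n)]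
    [∀ n, CompleteSpace (X n)] [Subsingleton (X 0)]
    (φ : ∀ n, X n →L[ℝ] X (n + 1)) (hφ : ∀ n, ‖φ n‖ ≤ 1)
    (I : Set ℕ) (hI : I.OrdConnected)
    (x : ∀ n, X n) (hx : ∀ n, n ∉ I → x n = 0)
    (m : ℕ) (hm : ∀ i ∈ I, m < i)
    (S : Finset ℕ) (hS : S.Nonempty) :
    rhoJ φ x S hS ≤
      rhoJ φ x (insert m (S.filter (· ∈ I))) (Finset.insert_nonempty _ _) := by
  classical
  unfold rhoJ
  refine Real.sqrt_le_sqrt ?_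
  have hmI : m ∉ I := fun h => lt_irrefl m (hm m h)
  have hxm : x m = 0 := hx m hmI
  set B := S.filter (· ∈ I) with hBdef
  rcases B.eq_empty_or_nonempty with hBe | hB
  · have hxS : ∀ n ∈ S, x n = 0 := by
      intro n hn
      by_cases hnI : n ∈ I
      · exfalso
        have hmem : n ∈ B := by rw [hBdef]; exact Finset.mem_filter.mpr ⟨hn, hnI⟩
        rw [hBe] at hmem
        exact absurd hmem (Finset.notMem_empty n)
      · exact hx n hnI
    have h1 : rho2 φ x S hS = 0 := by
      unfold rho2
      rw [sigma2_eq_zero φ x S hxS, hxS _ (S.max'_mem hS)]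
      simp
    have h2 : rho2 φ x (insert m B) (Finset.insert_nonempty _ _) = 0 := by
      rw [rho2_eq_of_eq φ x (by rw [hBe]; rfl) _ (Finset.singleton_nonempty m)]
      unfold rho2
      rw [sigma2_singleton, Finset.max'_singleton, hxm]
      simp
    rw [h1, h2]
  · set a := B.min' hB with hadef
    set b := B.max' hB with hbdef
    have haB : a ∈ B := B.min'_mem hB
    have hbB : b ∈ B := B.max'_mem hB
    have hmemB : ∀ n, n ∈ B ↔ n ∈ S ∧ n ∈ I := fun n => by
      rw [hBdef]; simp [Finset.mem_filter]
    have haI : a ∈ I := ((hmemB a).mp haB).2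
    have hbI : b ∈ I := ((hmemB b).mp hbB).2
    have haS : a ∈ S := ((hmemB a).mp haB).1
    have hbS : b ∈ S := ((hmemB b).mp hbB).1
    have hab : a ≤ b := B.min'_le b hbB
    have hma : ∀ q ∈ B, m < q := fun q hq => hm q ((hmemB q).mp hq).2
    have hmb : m < a := hma a haB
    have hmaxT : (insert m B).max' (Finset.insert_nonempty m B) = b := by
      rw [Finset.max'_insert m B hB]
      exact max_eq_right (le_of_lt (lt_of_lt_of_le hmb hab))
    have hrhs : rho2 φ x (insert m B) (Finset.insert_nonempty _ _)
        = ‖x a‖ ^ 2 + sigma2 φ x B + ‖x b‖ ^ 2 := by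
      unfold rho2
      rw [sigma2_insert_lt φ x B hB m hma, hxm, map_zero, zero_sub, norm_neg, hmaxT]
    set A := S.filter (· < a) with hAdef
    set C := S.filter (fun n => b < n) with hCdef
    have hAmem : ∀ n ∈ A, n < a := fun n hn => (Finset.mem_filter.mp hn).2
    have hAS : ∀ n ∈ A, n ∈ S := fun n hn => (Finset.mem_filter.mp hn).1
    have hCmem : ∀ n ∈ C, b < n := fun n hn => (Finset.mem_filter.mp hn).2
    have hCS : ∀ n ∈ C, n ∈ S := fun n hn => (Finset.mem_filter.mp hn).1
    have hxA : ∀ n ∈ A, x n = 0 := by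
      intro n hn
      refine hx n (fun hnI => ?_)
      have hnB : n ∈ B := (hmemB n).mpr ⟨hAS n hn, hnI⟩
      exact absurd (hAmem n hn) (not_lt.mpr (B.min'_le n hnB))
    have hxC : ∀ n ∈ C, x n = 0 := by
      intro n hn
      refine hx n (fun hnI => ?_)
      have hnB : n ∈ B := (hmemB n).mpr ⟨hCS n hn, hnI⟩
      exact absurd (hCmem n hn) (not_lt.mpr (B.le_max' n hnB))
    have hSdec : S = A ∪ B ∪ C := by
      ext n
      constructor
      · intro hn
        by_cases h1 : n < a
        · exact Finset.mem_union_left _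
            (Finset.mem_union_left _ (Finset.mem_filter.mpr ⟨hn, h1⟩))
        · by_cases h2 : b < n
          · exact Finset.mem_union_right _ (Finset.mem_filter.mpr ⟨hn, h2⟩)
          · refine Finset.mem_union_left _
              (Finset.mem_union_right _ ((hmemB n).mpr ⟨hn, ?_⟩))
            exact hI.out haI hbI ⟨not_lt.mp h1, not_lt.mp h2⟩
      · intro hn
        rcases Finset.mem_union.mp hn with h' | h'
        · rcases Finset.mem_union.mp h' with h'' | h''
          · exact hAS n h''
          · exact ((hmemB n).mp h'').1
        · exact hCS n h'
    have hABlt : ∀ p ∈ A, ∀ q ∈ B, p < q :=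
      fun p hp q hq => lt_of_lt_of_le (hAmem p hp) (B.min'_le q hq)
    have hDle : ∀ n ∈ A ∪ B, n ≤ b := by
      intro n hn
      rcases Finset.mem_union.mp hn with h' | h'
      · exact le_of_lt (lt_of_lt_of_le (hAmem n h') hab)
      · exact B.le_max' n h'
    have hDC : ∀ p ∈ A ∪ B, ∀ q ∈ C, p < q :=
      fun p hp q hq => lt_of_le_of_lt (hDle p hp) (hCmem q hq)
    have hDne : (A ∪ B).Nonempty := ⟨b, Finset.mem_union_right _ hbB⟩
    have hsigD : sigma2 φ x (A ∪ B) ≤ ‖x a‖ ^ 2 + sigma2 φ x B := by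
      rcases A.eq_empty_or_nonempty with hAe | hAne
      · rw [hAe, Finset.empty_union]
        have := sq_nonneg ‖x a‖
        linarith
      · rw [sigma2_union φ x A B hAne hB hABlt, sigma2_eq_zero φ x A hxA,
          hxA _ (A.max'_mem hAne), map_zero, zero_sub, norm_neg]
        linarith
    rcases C.eq_empty_or_nonempty with hCe | hCne
    · have hSAB : S = A ∪ B := by rw [hSdec, hCe, Finset.union_empty]
      have hmaxS : S.max' hS = b := by
        refine le_antisymm (Finset.max'_le _ _ _ fun n hn => ?_) (Finset.le_max' _ _ hbS)
        exact hDle n (by rw [← hSAB]; exact hn)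
      rw [hrhs]
      unfold rho2
      rw [hmaxS]
      have hss : sigma2 φ x S = sigma2 φ x (A ∪ B) := by rw [← hSAB]
      rw [hss]
      linarith
    · set c := C.min' hCne with hcdef
      have hcC : c ∈ C := C.min'_mem hCne
      have hmaxD : (A ∪ B).max' hDne = b :=
        le_antisymm (Finset.max'_le _ _ _ hDle)
          (Finset.le_max' _ b (Finset.mem_union_right _ hbB))
      have hsig : sigma2 φ x S
          = sigma2 φ x (A ∪ B) + ‖phiTo φ b c (x b) - x c‖ ^ 2 + sigma2 φ x C := by
        rw [hSdec, sigma2_union φ x (A ∪ B) C hDne hCne hDC, hmaxD]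
      have hmaxSC : S.max' hS ∈ C := by
        have h1 : c ≤ S.max' hS := Finset.le_max' S c (hCS c hcC)
        have h2 : S.max' hS ∈ A ∪ B ∪ C := by rw [← hSdec]; exact S.max'_mem hS
        rcases Finset.mem_union.mp h2 with h' | h'
        · exact absurd (lt_of_lt_of_le (hCmem c hcC) h1) (not_lt.mpr (hDle _ h'))
        · exact h'
      have hxmax : x (S.max' hS) = 0 := hxC _ hmaxSC
      have hterm : ‖phiTo φ b c (x b) - x c‖ ^ 2 ≤ ‖x b‖ ^ 2 := by
        rw [hxC c hcC, sub_zero]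
        exact pow_le_pow_left₀ (norm_nonneg _) (phiTo_norm_le φ hφ b (x b) c) 2
      rw [hrhs]
      unfold rho2
      rw [hsig, sigma2_eq_zero φ x C hxC, hxmax]
      have h02 : ‖(0 : X (S.max' hS))‖ ^ 2 = 0 := by simp
      rw [h02]
      linarith
end

section
/- Let I_1, …, I_m ⊆ ℕ_0 be pairwise disjoint intervals and let x_j ∈ R(P_{I_j}) for each j. Then ‖Σ_{j=1}^m x_j‖_J² ≤ 3 Σ_{j=1}^m ‖x_j‖_J². -/
open Filter Topology

section Aux
variable {X : ℕ → Type*} [∀ n, NormedAddCommGroup (X n)] [∀ n, NormedSpace ℝ (X n)]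
  (φ : ∀ n, X n →L[ℝ] X (n + 1))

lemma phiTo_self [Subsingleton (X 0)] (p : ℕ) (z : X p) : phiTo φ p p z = z := by
  cases p with
  | zero => exact Subsingleton.elim _ _
  | succ n => simp [phiTo]

lemma phiTo_succ_ne (q n : ℕ) (h : q + 1 ≠ n) :
    phiTo φ n (q + 1) = (φ q).comp (phiTo φ n q) := by
  rw [phiTo, dif_neg h]

lemma phiTo_norm_le_s8 [Subsingleton (X 0)] (hφ : ∀ n, ‖φ n‖ ≤ 1) {p q : ℕ} (h : p ≤ q) (z : X p) :
    ‖phiTo φ p q z‖ ≤ ‖z‖ := by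
  induction q, h using Nat.le_induction with
  | base => rw [phiTo_self]
  | succ q hq ih =>
    rw [phiTo_succ_ne φ q p (by omega)]
    calc ‖φ q (phiTo φ p q z)‖ ≤ ‖φ q‖ * ‖phiTo φ p q z‖ := (φ q).le_opNorm _
    _ ≤ 1 * ‖z‖ := mul_le_mul (hφ q) ih (norm_nonneg _) zero_le_one
    _ = ‖z‖ := one_mul _

lemma sigma2_nonneg (x : ∀ n, X n) (S : Finset ℕ) : 0 ≤ sigma2 φ x S := by
  unfold sigma2
  refine Finset.sum_nonneg fun p _ => Finset.sum_nonneg fun q _ => ?_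
  split <;> positivity

lemma rho2_nonneg (x : ∀ n, X n) (S : Finset ℕ) (hS : S.Nonempty) : 0 ≤ rho2 φ x S hS := by
  have := sigma2_nonneg φ x S
  unfold rho2; positivity

lemma rho2_le_sq (x : ∀ n, X n) (hx : memJhat φ x) (S : Finset ℕ) (hS : S.Nonempty) :
    rho2 φ x S hS ≤ (sSup (rhoSet φ x)) ^ 2 := by
  have h1 : rhoJ φ x S hS ≤ sSup (rhoSet φ x) := le_csSup hx ⟨S, hS, rfl⟩
  have h2 : rhoJ φ x S hS ^ 2 = rho2 φ x S hS := Real.sq_sqrt (rho2_nonneg φ x S hS)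
  calc rho2 φ x S hS = rhoJ φ x S hS ^ 2 := h2.symm
  _ ≤ (sSup (rhoSet φ x)) ^ 2 := pow_le_pow_left₀ (Real.sqrt_nonneg _) h1 2

lemma rhoSet_nonempty (x : ∀ n, X n) : (rhoSet φ x).Nonempty :=
  ⟨rhoJ φ x {0} (Finset.singleton_nonempty 0), ⟨{0}, Finset.singleton_nonempty 0, rfl⟩⟩

lemma sSup_rhoSet_nonneg (x : ∀ n, X n) (hx : memJhat φ x) : 0 ≤ sSup (rhoSet φ x) :=
  le_trans (Real.sqrt_nonneg _) (le_csSup hx ⟨{0}, Finset.singleton_nonempty 0, rfl⟩)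

lemma sq_norm_le (x : ∀ n, X n) (n : ℕ) : ‖x n‖ ^ 2 ≤ rho2 φ x {n} (Finset.singleton_nonempty n) := by
  unfold rho2
  have h1 : sigma2 φ x {n} = 0 := by
    unfold sigma2; simp
  rw [h1, Finset.max'_singleton, zero_add]

end Aux

section Core
variable {X : ℕ → Type*} [∀ n, NormedAddCommGroup (X n)] [∀ n, NormedSpace ℝ (X n)]

set_option maxHeartbeats 1000000 in
lemma core_bound [Subsingleton (X 0)] (φ : ∀ n, X n →L[ℝ] X (n + 1)) (hφ : ∀ n, ‖φ n‖ ≤ 1)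
    (m : ℕ) (I : Fin m → Set ℕ) (hI : ∀ j, (I j).OrdConnected)
    (hdisj : Pairwise (Function.onFun Disjoint I))
    (x : Fin m → ∀ n, X n) (hsupp : ∀ j n, n ∉ I j → x j n = 0)
    (hmem : ∀ j, memJhat φ (x j))
    (y : ∀ n, X n) (hy : ∀ n, y n = ∑ j, x j n)
    (S : Finset ℕ) (hS : S.Nonempty) :
    rho2 φ y S hS ≤ 2 * ∑ j, (sSup (rhoSet φ (x j))) ^ 2 := by
  classical
  set M : Fin m → ℝ := fun j => sSup (rhoSet φ (x j)) with hMdef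
  have hM0 : ∀ j, 0 ≤ M j := fun j => sSup_rhoSet_nonneg φ (x j) (hmem j)
  have hrho : ∀ j (T : Finset ℕ) (hT : T.Nonempty),
      sigma2 φ (x j) T + ‖x j (T.max' hT)‖ ^ 2 ≤ M j ^ 2 := by
    intro j T hT
    have h := rho2_le_sq φ (x j) (hmem j) T hT
    unfold rho2 at h
    exact h
  set k := S.max' hS with hkdef
  have hkS : k ∈ S := S.max'_mem hS
  have hdisj' : ∀ {j j' : Fin m} {n : ℕ}, j ≠ j' → n ∈ I j → n ∉ I j' :=
    fun {j j' n} hne hn hn' => (Set.disjoint_left.mp (hdisj hne) hn) hn'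
  have hy_eq : ∀ (j0 : Fin m) (n : ℕ), n ∈ I j0 → y n = x j0 n := by
    intro j0 n hn
    rw [hy]
    exact Finset.sum_eq_single j0
      (fun j _ hjne => hsupp j n (hdisj' (Ne.symm hjne) hn))
      (fun h => absurd (Finset.mem_univ j0) h)
  have hy_zero : ∀ n : ℕ, (∀ j, n ∉ I j) → y n = 0 := by
    intro n hn; rw [hy]; exact Finset.sum_eq_zero fun j _ => hsupp j n (hn j)
  set C : ℕ → ℕ → Prop := fun p q => p < q ∧ ∀ r ∈ S, ¬(p < r ∧ r < q) with hCdef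
  set g1 : Fin m → ℕ → ℕ → ℝ := fun j p q =>
    if C p q ∧ p ∈ I j ∧ q ∈ I j then ‖phiTo φ p q (x j p) - x j q‖ ^ 2 else 0 with hg1
  set g2 : Fin m → ℕ → ℕ → ℝ := fun j p q =>
    if C p q ∧ p ∈ I j ∧ q ∉ I j then 2 * ‖x j p‖ ^ 2 else 0 with hg2
  set g3 : Fin m → ℕ → ℕ → ℝ := fun j p q =>
    if C p q ∧ p ∉ I j ∧ q ∈ I j then 2 * ‖x j q‖ ^ 2 else 0 with hg3
  set E : Fin m → ℝ := fun j => if k ∈ I j then ‖x j k‖ ^ 2 else 0 with hE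
  have hg1nn : ∀ j p q, 0 ≤ g1 j p q := by
    intro j p q; simp only [hg1]; split <;> positivity
  have hg2nn : ∀ j p q, 0 ≤ g2 j p q := by
    intro j p q; simp only [hg2]; split <;> positivity
  have hg3nn : ∀ j p q, 0 ≤ g3 j p q := by
    intro j p q; simp only [hg3]; split <;> positivity
  have hEnn : ∀ j, 0 ≤ E j := by
    intro j; simp only [hE]; split <;> positivity
  -- pointwise bound for the sigma2 terms
  have key1 : ∀ p ∈ S, ∀ q ∈ S,
      (if C p q then ‖phiTo φ p q (y p) - y q‖ ^ 2 else 0) ≤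
        ∑ j, (g1 j p q + g2 j p q + g3 j p q) := by
    intro p hp q hq
    have hsum_nn : (0:ℝ) ≤ ∑ j, (g1 j p q + g2 j p q + g3 j p q) :=
      Finset.sum_nonneg fun j _ => add_nonneg (add_nonneg (hg1nn j p q) (hg2nn j p q)) (hg3nn j p q)
    by_cases hC : C p q
    · rw [if_pos hC]
      by_cases hex : ∃ j0, p ∈ I j0 ∧ q ∈ I j0
      · obtain ⟨j0, hp0, hq0⟩ := hex
        rw [hy_eq j0 p hp0, hy_eq j0 q hq0]
        have e : ‖phiTo φ p q (x j0 p) - x j0 q‖ ^ 2 = g1 j0 p q := by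
          simp only [hg1]; rw [if_pos ⟨hC, hp0, hq0⟩]
        rw [e]
        calc g1 j0 p q ≤ g1 j0 p q + g2 j0 p q + g3 j0 p q := by
              have := hg2nn j0 p q; have := hg3nn j0 p q; linarith
          _ ≤ ∑ j, (g1 j p q + g2 j p q + g3 j p q) :=
              Finset.single_le_sum (fun j _ => add_nonneg (add_nonneg (hg1nn j p q) (hg2nn j p q)) (hg3nn j p q))
                (Finset.mem_univ j0)
      · have hb : ‖phiTo φ p q (y p) - y q‖ ^ 2 ≤ 2 * ‖y p‖ ^ 2 + 2 * ‖y q‖ ^ 2 := by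
          have h1 : ‖phiTo φ p q (y p) - y q‖ ≤ ‖y p‖ + ‖y q‖ :=
            (norm_sub_le _ _).trans (add_le_add (phiTo_norm_le_s8 φ hφ (le_of_lt hC.1) _) le_rfl)
          calc ‖phiTo φ p q (y p) - y q‖ ^ 2 ≤ (‖y p‖ + ‖y q‖) ^ 2 :=
                pow_le_pow_left₀ (norm_nonneg _) h1 2
            _ ≤ 2 * ‖y p‖ ^ 2 + 2 * ‖y q‖ ^ 2 := by nlinarith [sq_nonneg (‖y p‖ - ‖y q‖)]
        refine hb.trans ?_
        have hbp : 2 * ‖y p‖ ^ 2 ≤ ∑ j, g2 j p q := by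
          by_cases hpj : ∃ j1, p ∈ I j1
          · obtain ⟨j1, hj1⟩ := hpj
            have hq1 : q ∉ I j1 := fun hqm => hex ⟨j1, hj1, hqm⟩
            rw [hy_eq j1 p hj1]
            have e : 2 * ‖x j1 p‖ ^ 2 = g2 j1 p q := by
              simp only [hg2]; rw [if_pos ⟨hC, hj1, hq1⟩]
            rw [e]
            exact Finset.single_le_sum (fun j _ => hg2nn j p q) (Finset.mem_univ j1)
          · rw [hy_zero p (fun j h => hpj ⟨j, h⟩)]
            simpa using Finset.sum_nonneg fun j _ => hg2nn j p q
        have hbq : 2 * ‖y q‖ ^ 2 ≤ ∑ j, g3 j p q := by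
          by_cases hqj : ∃ j2, q ∈ I j2
          · obtain ⟨j2, hj2⟩ := hqj
            have hp2 : p ∉ I j2 := fun hpm => hex ⟨j2, hpm, hj2⟩
            rw [hy_eq j2 q hj2]
            have e : 2 * ‖x j2 q‖ ^ 2 = g3 j2 p q := by
              simp only [hg3]; rw [if_pos ⟨hC, hp2, hj2⟩]
            rw [e]
            exact Finset.single_le_sum (fun j _ => hg3nn j p q) (Finset.mem_univ j2)
          · rw [hy_zero q (fun j h => hqj ⟨j, h⟩)]
            simpa using Finset.sum_nonneg fun j _ => hg3nn j p q
        calc 2 * ‖y p‖ ^ 2 + 2 * ‖y q‖ ^ 2 ≤ (∑ j, g2 j p q) + ∑ j, g3 j p q :=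
              add_le_add hbp hbq
          _ ≤ (∑ j, g1 j p q) + ((∑ j, g2 j p q) + ∑ j, g3 j p q) :=
              le_add_of_nonneg_left (Finset.sum_nonneg fun j _ => hg1nn j p q)
          _ = ∑ j, (g1 j p q + g2 j p q + g3 j p q) := by
              rw [Finset.sum_add_distrib, Finset.sum_add_distrib]; ring
    · rw [if_neg hC]; exact hsum_nn
  have step1 : sigma2 φ y S ≤ ∑ j, ∑ p ∈ S, ∑ q ∈ S, (g1 j p q + g2 j p q + g3 j p q) := by
    have h1 : sigma2 φ y S ≤ ∑ p ∈ S, ∑ q ∈ S, ∑ j, (g1 j p q + g2 j p q + g3 j p q) := by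
      unfold sigma2
      exact Finset.sum_le_sum fun p hp => Finset.sum_le_sum fun q hq => key1 p hp q hq
    calc sigma2 φ y S ≤ _ := h1
      _ = ∑ p ∈ S, ∑ j, ∑ q ∈ S, (g1 j p q + g2 j p q + g3 j p q) :=
            Finset.sum_congr rfl fun p _ => Finset.sum_comm
      _ = ∑ j, ∑ p ∈ S, ∑ q ∈ S, (g1 j p q + g2 j p q + g3 j p q) := Finset.sum_comm
  have stepE : ‖y k‖ ^ 2 ≤ ∑ j, E j := by
    by_cases hkj : ∃ j0, k ∈ I j0
    · obtain ⟨j0, hj0⟩ := hkj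
      rw [hy_eq j0 k hj0]
      have e : ‖x j0 k‖ ^ 2 = E j0 := by simp only [hE]; rw [if_pos hj0]
      rw [e]; exact Finset.single_le_sum (fun j _ => hEnn j) (Finset.mem_univ j0)
    · rw [hy_zero k (fun j h => hkj ⟨j, h⟩)]
      simpa using Finset.sum_nonneg fun j _ => hEnn j
  -- per-interval bound
  have perj : ∀ j, (∑ p ∈ S, ∑ q ∈ S, (g1 j p q + g2 j p q + g3 j p q)) + E j ≤ 2 * M j ^ 2 := by
    intro j
    simp only [Finset.sum_add_distrib]
    set A : Finset ℕ := S.filter (fun n => n ∈ I j) with hAdef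
    have hAS : A ⊆ S := Finset.filter_subset _ _
    have hmemA : ∀ {n : ℕ}, n ∈ A ↔ n ∈ S ∧ n ∈ I j := by
      intro n; rw [hAdef]; exact Finset.mem_filter
    by_cases hA : A.Nonempty
    · set a := A.max' hA with hadef
      set b := A.min' hA with hbdef
      have haA : a ∈ A := A.max'_mem hA
      have hbA : b ∈ A := A.min'_mem hA
      have haS : a ∈ S := hAS haA
      have haI : a ∈ I j := (hmemA.mp haA).2
      have hbS : b ∈ S := hAS hbA
      have hbI : b ∈ I j := (hmemA.mp hbA).2
      have hba : b ≤ a := A.min'_le a haA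
      -- g1 part
      have e1 : ∑ p ∈ S, ∑ q ∈ S, g1 j p q = ∑ p ∈ A, ∑ q ∈ A, g1 j p q := by
        rw [← Finset.sum_subset hAS (fun p hp hpn => Finset.sum_eq_zero fun q hq => by
          simp only [hg1]; exact if_neg fun hc => hpn (hmemA.mpr ⟨hp, hc.2.1⟩))]
        exact Finset.sum_congr rfl fun p hp => (Finset.sum_subset hAS (fun q hq hqn => by
          simp only [hg1]; exact if_neg fun hc => hqn (hmemA.mpr ⟨hq, hc.2.2⟩))).symm
      have subA : ∑ p ∈ S, ∑ q ∈ S, g1 j p q ≤ sigma2 φ (x j) A := by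
        rw [e1]; unfold sigma2
        refine Finset.sum_le_sum fun p hp => Finset.sum_le_sum fun q hq => ?_
        simp only [hg1]
        by_cases hc : C p q ∧ p ∈ I j ∧ q ∈ I j
        · rw [if_pos hc, if_pos ⟨hc.1.1, fun r hr => hc.1.2 r (hAS hr)⟩]
        · rw [if_neg hc]; split <;> positivity
      -- g2 part + E
      have hpa : ∀ p ∈ S, ∀ q ∈ S, (C p q ∧ p ∈ I j ∧ q ∉ I j) → p = a := by
        intro p hp q hq hc
        by_contra hne
        have hplt : p < a := lt_of_le_of_ne (A.le_max' p (hmemA.mpr ⟨hp, hc.2.1⟩)) hne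
        rcases lt_or_ge a q with h | h
        · exact hc.1.2 a haS ⟨hplt, h⟩
        · exact hc.2.2 ((hI j).out hc.2.1 haI ⟨le_of_lt hc.1.1, h⟩)
      have hsucc : ∀ q1 ∈ S, ∀ q2 ∈ S, C a q1 → C a q2 → q1 = q2 := by
        intro q1 h1 q2 h2 hc1 hc2
        by_contra hne
        rcases lt_or_gt_of_ne hne with h | h
        · exact hc2.2 q1 h1 ⟨hc1.1, h⟩
        · exact hc1.2 q2 h2 ⟨hc2.1, h⟩
      have subB : (∑ p ∈ S, ∑ q ∈ S, g2 j p q) + E j ≤ 2 * ‖x j a‖ ^ 2 := by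
        have e2 : ∑ p ∈ S, ∑ q ∈ S, g2 j p q = ∑ q ∈ S, g2 j a q :=
          Finset.sum_eq_single_of_mem a haS (fun p hp hne => Finset.sum_eq_zero fun q hq => by
            simp only [hg2]; exact if_neg fun hc => hne (hpa p hp q hq hc))
        rw [e2]
        by_cases hkI : k ∈ I j
        · have hka : k = a := le_antisymm (A.le_max' k (hmemA.mpr ⟨hkS, hkI⟩)) (S.le_max' a haS)
          have z : ∑ q ∈ S, g2 j a q = 0 := Finset.sum_eq_zero fun q hq => by
            simp only [hg2]
            exact if_neg fun hc =>
              absurd hc.1.1 (not_lt.mpr (le_trans (S.le_max' q hq) hka.le))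
          have eE : E j = ‖x j a‖ ^ 2 := by simp only [hE]; rw [if_pos hkI, hka]
          rw [z, eE]
          have := sq_nonneg ‖x j a‖
          linarith
        · have eE : E j = 0 := by simp only [hE]; exact if_neg hkI
          rw [eE, add_zero]
          by_cases hex : ∃ q0 ∈ S, C a q0 ∧ a ∈ I j ∧ q0 ∉ I j
          · obtain ⟨q0, hq0S, hq0⟩ := hex
            have e3 : ∀ q ∈ S, g2 j a q = if q = q0 then 2 * ‖x j a‖ ^ 2 else 0 := by
              intro q hq
              by_cases h : C a q ∧ a ∈ I j ∧ q ∉ I j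
              · simp only [hg2]; rw [if_pos h, if_pos (hsucc q hq q0 hq0S h.1 hq0.1)]
              · simp only [hg2]; rw [if_neg h, if_neg (fun heq => h (by rw [heq]; exact hq0))]
            rw [Finset.sum_congr rfl e3,
              Finset.sum_ite_eq' S q0 (fun _ => 2 * ‖x j a‖ ^ 2), if_pos hq0S]
          · have z : ∀ q ∈ S, g2 j a q = 0 := fun q hq => by
              simp only [hg2]; exact if_neg fun hc => hex ⟨q, hq, hc⟩
            rw [Finset.sum_eq_zero z]; positivity
      -- g3 part
      have hqb : ∀ p ∈ S, ∀ q ∈ S, (C p q ∧ p ∉ I j ∧ q ∈ I j) → q = b := by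
        intro p hp q hq hc
        by_contra hne
        have hblt : b < q := lt_of_le_of_ne (A.min'_le q (hmemA.mpr ⟨hq, hc.2.2⟩)) (Ne.symm hne)
        rcases lt_or_ge p b with h | h
        · exact hc.1.2 b hbS ⟨h, hblt⟩
        · exact hc.2.1 ((hI j).out hbI hc.2.2 ⟨h, le_of_lt hc.1.1⟩)
      have hpred : ∀ p1 ∈ S, ∀ p2 ∈ S, C p1 b → C p2 b → p1 = p2 := by
        intro p1 h1 p2 h2 hc1 hc2
        by_contra hne
        rcases lt_or_gt_of_ne hne with h | h
        · exact hc1.2 p2 h2 ⟨h, hc2.1⟩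
        · exact hc2.2 p1 h1 ⟨h, hc1.1⟩
      have hs2nn : 0 ≤ sigma2 φ (x j) A := sigma2_nonneg φ (x j) A
      by_cases hin : ∃ p0 ∈ S, ∃ q0 ∈ S, C p0 q0 ∧ p0 ∉ I j ∧ q0 ∈ I j
      · obtain ⟨p0, hp0S, q0, hq0S, hc0⟩ := hin
        have hq0b : q0 = b := hqb p0 hp0S q0 hq0S hc0
        subst hq0b
        have hp0I : p0 ∉ I j := hc0.2.1
        have hc0b : C p0 b := hc0.1
        have hp0b : p0 < b := hc0b.1
        have hp0A : p0 ∉ A := fun h => hp0I (hmemA.mp h).2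
        have subC : ∑ p ∈ S, ∑ q ∈ S, g3 j p q ≤ 2 * ‖x j b‖ ^ 2 := by
          have e4 : ∀ p ∈ S, (∑ q ∈ S, g3 j p q) = if p = p0 then 2 * ‖x j b‖ ^ 2 else 0 := by
            intro p hp
            by_cases hpp : p = p0
            · subst hpp
              rw [if_pos rfl]
              have e5 : ∀ q ∈ S, g3 j p q = if q = b then 2 * ‖x j b‖ ^ 2 else 0 := by
                intro q hq
                by_cases h : C p q ∧ p ∉ I j ∧ q ∈ I j
                · have hqb' : q = b := hqb p hp q hq h
                  simp only [hg3]; rw [if_pos h, if_pos hqb', hqb']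
                · simp only [hg3]
                  rw [if_neg h, if_neg (fun heq => h (by rw [heq]; exact ⟨hc0b, hp0I, hbI⟩))]
              rw [Finset.sum_congr rfl e5,
                Finset.sum_ite_eq' S b (fun _ => 2 * ‖x j b‖ ^ 2), if_pos hbS]
            · rw [if_neg hpp]
              refine Finset.sum_eq_zero fun q hq => ?_
              simp only [hg3]
              refine if_neg fun hc => hpp ?_
              have hqb' : q = b := hqb p hp q hq hc
              have hcb : C p b := by rw [← hqb']; exact hc.1
              exact hpred p hp p0 hp0S hcb hc0b
          rw [Finset.sum_congr rfl e4,
            Finset.sum_ite_eq' S p0 (fun _ => 2 * ‖x j b‖ ^ 2), if_pos hp0S]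
        have hTne : (insert p0 A).Nonempty := ⟨p0, Finset.mem_insert_self _ _⟩
        have hmaxT : (insert p0 A).max' hTne = a := by
          apply le_antisymm
          · apply Finset.max'_le
            intro n hn
            rcases Finset.mem_insert.mp hn with h | h
            · rw [h]; exact le_of_lt (lt_of_lt_of_le hp0b hba)
            · exact A.le_max' n h
          · exact Finset.le_max' _ a (Finset.mem_insert_of_mem haA)
        have subD : sigma2 φ (x j) A + ‖x j b‖ ^ 2 ≤ sigma2 φ (x j) (insert p0 A) := by
          have hsigT : sigma2 φ (x j) (insert p0 A) =
              (∑ q ∈ insert p0 A, if p0 < q ∧ ∀ r ∈ insert p0 A, ¬(p0 < r ∧ r < q) then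
                ‖phiTo φ p0 q (x j p0) - x j q‖ ^ 2 else 0)
              + ∑ p ∈ A, ∑ q ∈ insert p0 A, if p < q ∧ ∀ r ∈ insert p0 A, ¬(p < r ∧ r < q) then
                ‖phiTo φ p q (x j p) - x j q‖ ^ 2 else 0 := by
            unfold sigma2; exact Finset.sum_insert hp0A
          rw [hsigT]
          have hCT : ∀ r ∈ insert p0 A, ¬(p0 < r ∧ r < b) := by
            intro r hr hc
            rcases Finset.mem_insert.mp hr with h | h
            · rw [h] at hc; exact lt_irrefl p0 hc.1
            · exact absurd hc.2 (not_lt.mpr (A.min'_le r h))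
          have hterm : (if p0 < b ∧ ∀ r ∈ insert p0 A, ¬(p0 < r ∧ r < b) then
              ‖phiTo φ p0 b (x j p0) - x j b‖ ^ 2 else 0) = ‖x j b‖ ^ 2 := by
            rw [if_pos ⟨hp0b, hCT⟩, hsupp j p0 hp0I, map_zero, zero_sub, norm_neg]
          have h1 : ‖x j b‖ ^ 2 ≤ ∑ q ∈ insert p0 A,
              (if p0 < q ∧ ∀ r ∈ insert p0 A, ¬(p0 < r ∧ r < q) then
                ‖phiTo φ p0 q (x j p0) - x j q‖ ^ 2 else 0) := by
            calc ‖x j b‖ ^ 2 = _ := hterm.symm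
              _ ≤ _ := Finset.single_le_sum (f := fun q =>
                  if p0 < q ∧ ∀ r ∈ insert p0 A, ¬(p0 < r ∧ r < q) then
                    ‖phiTo φ p0 q (x j p0) - x j q‖ ^ 2 else 0)
                  (fun q _ => by split <;> positivity) (Finset.mem_insert_of_mem hbA)
          have h2 : sigma2 φ (x j) A ≤ ∑ p ∈ A, ∑ q ∈ insert p0 A,
              (if p < q ∧ ∀ r ∈ insert p0 A, ¬(p < r ∧ r < q) then
                ‖phiTo φ p q (x j p) - x j q‖ ^ 2 else 0) := by
            unfold sigma2
            refine Finset.sum_le_sum fun p hp => ?_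
            have hstep : ∀ q ∈ A,
                (if p < q ∧ ∀ r ∈ A, ¬(p < r ∧ r < q) then
                  ‖phiTo φ p q (x j p) - x j q‖ ^ 2 else 0) ≤
                (if p < q ∧ ∀ r ∈ insert p0 A, ¬(p < r ∧ r < q) then
                  ‖phiTo φ p q (x j p) - x j q‖ ^ 2 else 0) := by
              intro q hq
              by_cases hc : p < q ∧ ∀ r ∈ A, ¬(p < r ∧ r < q)
              · have hcT : p < q ∧ ∀ r ∈ insert p0 A, ¬(p < r ∧ r < q) := by
                  refine ⟨hc.1, fun r hr hcc => ?_⟩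
                  rcases Finset.mem_insert.mp hr with h | h
                  · rw [h] at hcc
                    exact absurd hcc.1 (not_lt.mpr (le_of_lt (lt_of_lt_of_le hp0b (A.min'_le p hp))))
                  · exact hc.2 r h hcc
                rw [if_pos hc, if_pos hcT]
              · rw [if_neg hc]; split <;> positivity
            calc (∑ q ∈ A, if p < q ∧ ∀ r ∈ A, ¬(p < r ∧ r < q) then
                  ‖phiTo φ p q (x j p) - x j q‖ ^ 2 else 0)
                ≤ ∑ q ∈ A, (if p < q ∧ ∀ r ∈ insert p0 A, ¬(p < r ∧ r < q) then
                  ‖phiTo φ p q (x j p) - x j q‖ ^ 2 else 0) := Finset.sum_le_sum hstep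
              _ ≤ _ := Finset.sum_le_sum_of_subset_of_nonneg (Finset.subset_insert _ _)
                  (fun q _ _ => by split <;> positivity)
          linarith
        have hT1 : sigma2 φ (x j) (insert p0 A) + ‖x j a‖ ^ 2 ≤ M j ^ 2 := by
          have h := hrho j (insert p0 A) hTne
          rwa [hmaxT] at h
        linarith [subA, subB, subC, subD, hT1, hs2nn]
      · have z3 : ∑ p ∈ S, ∑ q ∈ S, g3 j p q = 0 :=
          Finset.sum_eq_zero fun p hp => Finset.sum_eq_zero fun q hq => by
            simp only [hg3]; exact if_neg fun hc => hin ⟨p, hp, q, hq, hc⟩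
        have hT1 : sigma2 φ (x j) A + ‖x j a‖ ^ 2 ≤ M j ^ 2 := hrho j A hA
        have := sq_nonneg ‖x j a‖
        linarith [subA, subB]
    · have hnot : ∀ n ∈ S, n ∉ I j := fun n hn hni => hA ⟨n, hmemA.mpr ⟨hn, hni⟩⟩
      have z1 : ∑ p ∈ S, ∑ q ∈ S, g1 j p q = 0 :=
        Finset.sum_eq_zero fun p hp => Finset.sum_eq_zero fun q hq => by
          simp only [hg1]; exact if_neg fun hc => hnot p hp hc.2.1
      have z2 : ∑ p ∈ S, ∑ q ∈ S, g2 j p q = 0 :=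
        Finset.sum_eq_zero fun p hp => Finset.sum_eq_zero fun q hq => by
          simp only [hg2]; exact if_neg fun hc => hnot p hp hc.2.1
      have z3 : ∑ p ∈ S, ∑ q ∈ S, g3 j p q = 0 :=
        Finset.sum_eq_zero fun p hp => Finset.sum_eq_zero fun q hq => by
          simp only [hg3]; exact if_neg fun hc => hnot q hq hc.2.2
      have zE : E j = 0 := by simp only [hE]; exact if_neg (fun h => hnot k hkS h)
      rw [z1, z2, z3, zE]
      have := hM0 j
      nlinarith
  have main : rho2 φ y S hS ≤
      ∑ j, ((∑ p ∈ S, ∑ q ∈ S, (g1 j p q + g2 j p q + g3 j p q)) + E j) := by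
    unfold rho2
    rw [Finset.sum_add_distrib]
    exact add_le_add step1 stepE
  calc rho2 φ y S hS ≤ _ := main
    _ ≤ ∑ j, 2 * M j ^ 2 := Finset.sum_le_sum fun j _ => perj j
    _ = 2 * ∑ j, M j ^ 2 := (Finset.mul_sum _ _ _).symm

end Core


set_option maxHeartbeats 2000000 in
/-- upper 2-estimate. If `I_1, …, I_m` are pairwise disjoint intervals
and `x_j` is supported in `I_j`, then `‖Σ x_j‖_J² ≤ 3 Σ ‖x_j‖_J²`. -/
theorem stmt8 {X : ℕ → Type*} [∀ n, NormedAddCommGroup (X n)] [∀ n, NormedSpace ℝ (X n)]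
    [∀ n, CompleteSpace (X n)] [Subsingleton (X 0)]
    (φ : ∀ n, X n →L[ℝ] X (n + 1)) (hφ : ∀ n, ‖φ n‖ ≤ 1)
    (m : ℕ) (I : Fin m → Set ℕ) (hI : ∀ j, (I j).OrdConnected)
    (hdisj : Pairwise (Function.onFun Disjoint I))
    (x : Fin m → ∀ n, X n) (hsupp : ∀ j n, n ∉ I j → x j n = 0)
    (hmem : ∀ j, memJhat φ (x j)) :
    memJhat φ (∑ j, x j) ∧
    normJ φ (∑ j, x j) ^ 2 ≤ 3 * ∑ j, normJ φ (x j) ^ 2 := by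
  classical
  set M : Fin m → ℝ := fun j => sSup (rhoSet φ (x j)) with hMdef
  have hM0 : ∀ j, 0 ≤ M j := fun j => sSup_rhoSet_nonneg φ (x j) (hmem j)
  have hy : ∀ n, (∑ j, x j) n = ∑ j, x j n := fun n => Finset.sum_apply _ _ _
  have hcore : ∀ (S : Finset ℕ) (hS : S.Nonempty),
      rho2 φ (∑ j, x j) S hS ≤ 2 * ∑ j, M j ^ 2 :=
    fun S hS => core_bound φ hφ m I hI hdisj x hsupp hmem _ hy S hS
  have hMsum : 0 ≤ ∑ j, M j ^ 2 := Finset.sum_nonneg fun j _ => sq_nonneg _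
  set B := Real.sqrt (2 * ∑ j, M j ^ 2) with hB
  have hbdd : ∀ r ∈ rhoSet φ (∑ j, x j), r ≤ B := by
    rintro r ⟨S, hS, rfl⟩
    exact Real.sqrt_le_sqrt (hcore S hS)
  have hmemhat : memJhat φ (∑ j, x j) := ⟨B, fun r hr => hbdd r hr⟩
  refine ⟨hmemhat, ?_⟩
  have hne : (rhoSet φ (∑ j, x j)).Nonempty := rhoSet_nonempty φ _
  have hsup_le : sSup (rhoSet φ (∑ j, x j)) ≤ B := csSup_le hne hbdd
  have hsup0 : 0 ≤ sSup (rhoSet φ (∑ j, x j)) := sSup_rhoSet_nonneg φ _ hmemhat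
  have hB2 : B ^ 2 = 2 * ∑ j, M j ^ 2 := Real.sq_sqrt (by linarith [hMsum])
  have hnormsq : normJ φ (∑ j, x j) ^ 2 ≤ ∑ j, M j ^ 2 := by
    unfold normJ
    rw [mul_pow]
    have h2 : ((Real.sqrt 2)⁻¹) ^ 2 = 2⁻¹ := by
      rw [inv_pow, Real.sq_sqrt (by norm_num : (0:ℝ) ≤ 2)]
    rw [h2]
    have hle : sSup (rhoSet φ (∑ j, x j)) ^ 2 ≤ 2 * ∑ j, M j ^ 2 := by
      calc _ ≤ B ^ 2 := pow_le_pow_left₀ hsup0 hsup_le 2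
        _ = _ := hB2
    linarith
  have hrhs : ∑ j, normJ φ (x j) ^ 2 = 2⁻¹ * ∑ j, M j ^ 2 := by
    rw [Finset.mul_sum]
    refine Finset.sum_congr rfl fun j _ => ?_
    unfold normJ
    rw [mul_pow, inv_pow, Real.sq_sqrt (by norm_num : (0:ℝ) ≤ 2)]
  rw [hrhs]
  linarith [hMsum, hnormsq]
end
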